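/- arXiv:1009.4364 — 2 statements merged into one kernel-verified Lean document; each statement's English description precedes it below -/
import Mathlib

section
/- Let h ∈ ℤ[x] be a nonzero polynomial and let c ∈ ℂ be a complex number with |c| = 1 such that (x − c)^κ divides h in ℂ[x] for some integer κ ≥ 1. Then the distortion of h satisfies Δ_h(l) ⪰ l^{κ+1}. -/
open scoped Pointwise

namespace DistortionPaper

section Defs

variable (A B : Type*) [Group A] [Group B]

/-- The base group of the restricted wreath product: finitely supported functions `B → A`
under pointwise multiplication, as a subgroup of `B → A`. -/
def WreathBase : Subgroup (B → A) where
  carrier := {f | (Function.mulSupport f).Finite}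
  one_mem' := by
    simp [Function.mulSupport_one]
  mul_mem' := by
    intro f g hf hg
    exact ((Set.Finite.union hf hg).subset (Function.mulSupport_mul f g))
  inv_mem' := by
    intro f hf
    simpa [Function.mulSupport_inv] using hf

/-- The shift automorphism of the base group: `(g ∘ f)(x) = f(x * g)`. -/
def wreathShift (g : B) : WreathBase A B ≃* WreathBase A B where
  toFun f := ⟨fun x => (f : B → A) (x * g), by
    have h : Function.mulSupport (fun x => (f : B → A) (x * g))
        ⊆ (fun x : B => x * g) ⁻¹' Function.mulSupport (f : B → A) := fun x hx => hx
    exact (Set.Finite.preimage (Set.injOn_of_injective (mul_left_injective g)) f.2).subset h⟩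
  invFun f := ⟨fun x => (f : B → A) (x * g⁻¹), by
    have h : Function.mulSupport (fun x => (f : B → A) (x * g⁻¹))
        ⊆ (fun x : B => x * g⁻¹) ⁻¹' Function.mulSupport (f : B → A) := fun x hx => hx
    exact (Set.Finite.preimage (Set.injOn_of_injective (mul_left_injective g⁻¹)) f.2).subset h⟩
  left_inv f := Subtype.ext <| funext fun x => by simp [mul_assoc]
  right_inv f := Subtype.ext <| funext fun x => by simp [mul_assoc]
  map_mul' f₁ f₂ := Subtype.ext <| funext fun _ => rfl

/-- The action of `B` on the base group by shifts. -/
def wreathAction : B →* MulAut (WreathBase A B) where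
  toFun g := wreathShift A B g
  map_one' := by
    refine MulEquiv.ext fun f => Subtype.ext <| funext fun x => ?_
    show (f : B → A) (x * 1) = (f : B → A) x
    rw [mul_one]
  map_mul' g₁ g₂ := by
    refine MulEquiv.ext fun f => Subtype.ext <| funext fun x => ?_
    show (f : B → A) (x * (g₁ * g₂)) = (f : B → A) (x * g₁ * g₂)
    rw [mul_assoc]

/-- The restricted wreath product `A wr B`. -/
abbrev WreathProduct := WreathBase A B ⋊[wreathAction A B] B

/-- The element of the base group supported at `1 ∈ B` with value `a`. -/
noncomputable def toBase (a : A) : WreathBase A B := by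
  classical
  exact ⟨fun x => if x = (1 : B) then a else 1, by
    apply Set.Finite.subset (Set.finite_singleton (1 : B))
    intro x hx
    simp only [Function.mem_mulSupport] at hx
    simp only [Set.mem_singleton_iff]
    by_contra hne
    rw [if_neg hne] at hx
    exact hx rfl⟩

/-- The canonical copy of `A` in `A wr B` (functions supported at `1`). -/
noncomputable def ofPassive (a : A) : WreathProduct A B :=
  SemidirectProduct.inl (toBase A B a)

/-- The canonical copy of `B` in `A wr B`. -/
def ofActive (g : B) : WreathProduct A B := SemidirectProduct.inr g

/-- The generating set `S ∪ T` of `A wr B` obtained from generating sets `S` of `A`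
and `T` of `B`. -/
def wreathGen (S : Set A) (T : Set B) : Set (WreathProduct A B) :=
  (fun a => ofPassive A B a) '' S ∪ (fun g => ofActive A B g) '' T

end Defs

/-- Word length of `g` with respect to the set `T`: the least `n` such that `g` is a
product of `n` elements of `T ∪ T⁻¹` (and `0` if no such `n` exists). -/
noncomputable def wordLength {G : Type*} [Group G] (T : Set G) (g : G) : ℕ :=
  sInf {n | ∃ f : Fin n → G, (∀ i, f i ∈ T ∪ T⁻¹) ∧ (List.ofFn f).prod = g}

/-- The distortion function of a subgroup `H` of `G`, where `T` is a generating set of `G`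
and `S` a generating set of `H`. -/
noncomputable def distortion {G : Type*} [Group G] (T : Set G) (H : Subgroup G)
    (S : Set H) (l : ℕ) : ℕ :=
  sSup (wordLength S '' {h : H | wordLength T (h : G) ≤ l})

/-- `f ⪯ g` : there is `C > 0` with `f l ≤ C * g (C * l)` for all `l`. -/
def Dominates (f g : ℕ → ℕ) : Prop := ∃ C : ℕ, 0 < C ∧ ∀ l, f l ≤ C * g (C * l)

/-- `f ≈ g` : `f ⪯ g` and `g ⪯ f`. -/
def DistEquiv (f g : ℕ → ℕ) : Prop := Dominates f g ∧ Dominates g f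

/-- A subgroup is subnormal if there is a finite chain from it to the whole group,
each term normal in the next. -/
def IsSubnormal {G : Type*} [Group G] (H : Subgroup G) : Prop :=
  ∃ (n : ℕ) (c : ℕ → Subgroup G), c 0 = H ∧ c n = ⊤ ∧
    ∀ i < n, c i ≤ c (i + 1) ∧ ∀ x ∈ c (i + 1), ∀ h ∈ c i, x * h * x⁻¹ ∈ c i

/-- `ℤ` as a multiplicative group. -/
abbrev Mℤ := Multiplicative ℤ

/-- The wreath product `ℤ wr ℤ`. -/
abbrev ZwrZ := WreathProduct Mℤ Mℤ

/-- The standard generator `a` of `ℤ wr ℤ` (passive copy, supported at `1`). -/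
noncomputable def aZ : ZwrZ := ofPassive Mℤ Mℤ (Multiplicative.ofAdd 1)

/-- The standard generator `b` of `ℤ wr ℤ` (active copy). -/
def bZ : ZwrZ := ofActive Mℤ Mℤ (Multiplicative.ofAdd 1)


/-- `S(f)`: the sum of the absolute values of the coefficients of `f`. -/
def polyS (f : Polynomial ℤ) : ℕ := ∑ i ∈ f.support, (f.coeff i).natAbs

/-- The distortion function of a polynomial `h ∈ ℤ[x]`:
`Δ_h(l) = sup { S(f) : deg f ≤ l, S(hf) ≤ l }`. -/
noncomputable def polyDistortion (h : Polynomial ℤ) (l : ℕ) : ℕ :=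
  sSup {n | ∃ f : Polynomial ℤ, f.natDegree ≤ l ∧ polyS (h * f) ≤ l ∧ polyS f = n}

/-- The element `h(x)a = Σ_j d_j (bʲ a b⁻ʲ)` of the base group of `ℤ wr ℤ`, for
`h(x) = Σ_j d_j xʲ ∈ ℤ[x]`. -/
noncomputable def polyElem (h : Polynomial ℤ) : WreathBase Mℤ Mℤ :=
  ∏ j ∈ h.support,
    (wreathAction Mℤ Mℤ (Multiplicative.ofAdd (j : ℤ))
        (toBase Mℤ Mℤ (Multiplicative.ofAdd 1))) ^ (h.coeff j)

/-- The element `w = h(x)a` of `ℤ wr ℤ`. -/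
noncomputable def wPoly (h : Polynomial ℤ) : ZwrZ := SemidirectProduct.inl (polyElem h)

/-- The exemplary subgroup `H = ⟨b, h(x)a⟩` of `ℤ wr ℤ` associated with `h ∈ ℤ[x]`. -/
noncomputable def exemplary (h : Polynomial ℤ) : Subgroup ZwrZ :=
  Subgroup.closure {bZ, wPoly h}

/-- The generating set `{b, w}` of the exemplary subgroup. -/
noncomputable def exemplaryGens (h : Polynomial ℤ) : Set ↥(exemplary h) :=
  {⟨bZ, Subgroup.subset_closure (Set.mem_insert _ _)⟩,
   ⟨wPoly h, Subgroup.subset_closure (Set.mem_insert_iff.mpr (Or.inr rfl))⟩}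

section Proof13

open Polynomial Finset

/-! ### Basic facts about `polyS` -/

private lemma polyS_eq_sum_range {g : Polynomial ℤ} {N : ℕ} (hN : g.natDegree < N) :
    polyS g = ∑ i ∈ Finset.range N, (g.coeff i).natAbs := by
  unfold polyS
  apply Finset.sum_subset
  · intro i hi
    exact Finset.mem_range.mpr (lt_of_le_of_lt (Polynomial.le_natDegree_of_mem_supp i hi) hN)
  · intro i _ hi
    simp [Polynomial.notMem_support_iff.mp hi]

private lemma sum_range_natAbs_le_polyS (g : Polynomial ℤ) (N : ℕ) :
    ∑ i ∈ Finset.range N, (g.coeff i).natAbs ≤ polyS g := by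
  rcases le_or_gt N (g.natDegree + 1) with hN | hN
  · rw [polyS_eq_sum_range (Nat.lt_succ_self _)]
    exact Finset.sum_le_sum_of_subset (Finset.range_subset_range.mpr hN)
  · exact le_of_eq (polyS_eq_sum_range (by omega)).symm

private lemma natAbs_coeff_le_polyS (g : Polynomial ℤ) (i : ℕ) :
    (g.coeff i).natAbs ≤ polyS g := by
  rcases le_or_gt i g.natDegree with hi | hi
  · calc (g.coeff i).natAbs
        ≤ ∑ j ∈ Finset.range (g.natDegree + 1), (g.coeff j).natAbs :=
          Finset.single_le_sum (f := fun j => (g.coeff j).natAbs) (fun j _ => Nat.zero_le _)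
            (Finset.mem_range.mpr (Nat.lt_succ_of_le hi))
      _ ≤ polyS g := sum_range_natAbs_le_polyS _ _
  · rw [Polynomial.coeff_eq_zero_of_natDegree_lt hi]
    simp

private lemma polyS_one : polyS (1 : Polynomial ℤ) = 1 := by
  have h : (1 : Polynomial ℤ).support = {0} := by
    ext i
    simp only [Polynomial.mem_support_iff, Polynomial.coeff_one, Finset.mem_singleton]
    constructor
    · intro hi; by_contra hne; simp [if_neg (by exact fun h => hne h : ¬ i = 0)] at hi
    · intro hi; subst hi; simp
  unfold polyS
  rw [h]
  simp [Polynomial.coeff_one]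

private lemma bddAbove_distortion_set (h : Polynomial ℤ) (hh : h ≠ 0) (L : ℕ) :
    BddAbove {n | ∃ f : Polynomial ℤ, f.natDegree ≤ L ∧ polyS (h * f) ≤ L ∧ polyS f = n} := by
  classical
  have hGGfin : Set.Finite {g : Polynomial ℤ | g.natDegree ≤ L + h.natDegree ∧ polyS g ≤ L} := by
    set GG := {g : Polynomial ℤ | g.natDegree ≤ L + h.natDegree ∧ polyS g ≤ L} with hGG
    have hmem : ∀ g : GG, ∀ i : Fin (L + h.natDegree + 1),
        (g : Polynomial ℤ).coeff i ∈ Finset.Icc (-(L : ℤ)) (L : ℤ) := by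
      intro g i
      have h1 : ((g : Polynomial ℤ).coeff i).natAbs ≤ L :=
        le_trans (natAbs_coeff_le_polyS _ _) g.2.2
      rw [Finset.mem_Icc]
      omega
    have hinj : Function.Injective
        (fun (g : GG) (i : Fin (L + h.natDegree + 1)) =>
          (⟨(g : Polynomial ℤ).coeff i, hmem g i⟩ : Finset.Icc (-(L : ℤ)) (L : ℤ))) := by
      intro g1 g2 heq
      apply Subtype.ext
      apply Polynomial.ext
      intro i
      have hg1 := g1.2.1
      have hg2 := g2.2.1
      rcases lt_or_ge i (L + h.natDegree + 1) with hi | hi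
      · have := congrFun heq ⟨i, hi⟩
        exact congrArg Subtype.val this
      · rw [Polynomial.coeff_eq_zero_of_natDegree_lt (by omega : (g1 : Polynomial ℤ).natDegree < i),
          Polynomial.coeff_eq_zero_of_natDegree_lt (by omega : (g2 : Polynomial ℤ).natDegree < i)]
    exact Set.finite_coe_iff.mp (Finite.of_injective _ hinj)
  have hpre : Set.Finite {f : Polynomial ℤ | f.natDegree ≤ L ∧ polyS (h * f) ≤ L} := by
    apply Set.Finite.subset (Set.Finite.preimage
      (Set.injOn_of_injective (mul_right_injective₀ hh)) hGGfin)
    intro f hf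
    simp only [Set.mem_preimage, Set.mem_setOf_eq]
    constructor
    · calc (h * f).natDegree ≤ h.natDegree + f.natDegree := Polynomial.natDegree_mul_le
        _ ≤ L + h.natDegree := by have := hf.1; omega
    · exact hf.2
  have himg : {n | ∃ f : Polynomial ℤ, f.natDegree ≤ L ∧ polyS (h * f) ≤ L ∧ polyS f = n}
      = polyS '' {f : Polynomial ℤ | f.natDegree ≤ L ∧ polyS (h * f) ≤ L} := by
    ext n
    constructor
    · rintro ⟨f, h1, h2, h3⟩; exact ⟨f, ⟨h1, h2⟩, h3⟩
    · rintro ⟨f, ⟨h1, h2⟩, h3⟩; exact ⟨f, h1, h2, h3⟩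
  rw [himg]
  exact (hpre.image _).bddAbove

/-! ### Twisted moments of a polynomial vanish at a root of high multiplicity -/

private noncomputable def Msum (G : Polynomial ℂ) (a : ℂ) (u N : ℕ) : ℂ :=
  ∑ i ∈ Finset.range N, G.coeff i * (i : ℂ) ^ u * a ^ i

private lemma Msum_stable (G : Polynomial ℂ) (a : ℂ) (u : ℕ) {N N' : ℕ}
    (h1 : G.natDegree < N) (h2 : N ≤ N') : Msum G a u N' = Msum G a u N := by
  unfold Msum
  symm
  apply Finset.sum_subset (Finset.range_subset_range.mpr h2)
  intro i _ hi
  have hii : N ≤ i := le_of_not_gt (fun hlt => hi (Finset.mem_range.mpr hlt))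
  rw [Polynomial.coeff_eq_zero_of_natDegree_lt (by omega), zero_mul, zero_mul]

private lemma Msum_step (G : Polynomial ℂ) (a : ℂ) (u N : ℕ) (hN : G.natDegree < N) :
    Msum ((X - C a) * G) a u (N + 1)
      = a * ∑ j ∈ Finset.range N, G.coeff j * (((j : ℂ) + 1) ^ u - (j : ℂ) ^ u) * a ^ j := by
  have hc0 : ((X - C a) * G).coeff 0 = -a * G.coeff 0 := by
    rw [Polynomial.mul_coeff_zero]
    simp
  have hcs : ∀ i : ℕ, ((X - C a) * G).coeff (i + 1) = G.coeff i - a * G.coeff (i + 1) := by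
    intro i
    rw [sub_mul, Polynomial.coeff_sub, Polynomial.coeff_X_mul, Polynomial.coeff_C_mul]
  have hkey : ∑ j ∈ Finset.range N, G.coeff j * (j : ℂ) ^ u * a ^ j
      = (∑ i ∈ Finset.range N, G.coeff (i + 1) * ((i : ℂ) + 1) ^ u * a ^ (i + 1))
        + G.coeff 0 * (0 : ℂ) ^ u * a ^ 0 := by
    have h1 : ∑ j ∈ Finset.range N, G.coeff j * (j : ℂ) ^ u * a ^ j
        = ∑ j ∈ Finset.range (N + 1), G.coeff j * (j : ℂ) ^ u * a ^ j :=
      (Msum_stable G a u hN (Nat.le_succ N)).symm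
    rw [h1, Finset.sum_range_succ']
    congr 1
    · apply Finset.sum_congr rfl
      intro i _
      push_cast
      ring
    · norm_num
  unfold Msum
  rw [Finset.sum_range_succ']
  have e1 : ∀ i ∈ Finset.range N,
      ((X - C a) * G).coeff (i + 1) * ((i + 1 : ℕ) : ℂ) ^ u * a ^ (i + 1)
        = a * (G.coeff i * ((i : ℂ) + 1) ^ u * a ^ i)
          - a * (G.coeff (i + 1) * ((i : ℂ) + 1) ^ u * a ^ (i + 1)) := by
    intro i _
    rw [hcs]
    push_cast
    ring
  rw [Finset.sum_congr rfl e1, Finset.sum_sub_distrib, hc0]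
  have e2 : (∑ i ∈ Finset.range N, a * (G.coeff (i + 1) * ((i : ℂ) + 1) ^ u * a ^ (i + 1)))
      = a * ((∑ j ∈ Finset.range N, G.coeff j * (j : ℂ) ^ u * a ^ j)
          - G.coeff 0 * (0 : ℂ) ^ u * a ^ 0) := by
    rw [← Finset.mul_sum]
    congr 1
    rw [hkey]
    ring
  rw [e2, ← Finset.mul_sum]
  have e3 : ∑ j ∈ Finset.range N, G.coeff j * (((j : ℂ) + 1) ^ u - (j : ℂ) ^ u) * a ^ j
      = (∑ j ∈ Finset.range N, G.coeff j * ((j : ℂ) + 1) ^ u * a ^ j)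
        - ∑ j ∈ Finset.range N, G.coeff j * (j : ℂ) ^ u * a ^ j := by
    rw [← Finset.sum_sub_distrib]
    apply Finset.sum_congr rfl
    intro j _
    ring
  rw [e3]
  push_cast
  ring

private lemma Msum_vanish (a : ℂ) :
    ∀ κ : ℕ, ∀ R : Polynomial ℂ, ∀ u N : ℕ, u < κ →
      ((X - C a) ^ κ * R).natDegree < N → Msum ((X - C a) ^ κ * R) a u N = 0 := by
  intro κ
  induction κ with
  | zero => intro R u N hu _; exact absurd hu (Nat.not_lt_zero u)
  | succ κ ih =>
    intro R u N hu hN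
    rcases eq_or_ne R 0 with rfl | hR
    · simp [Msum]
    · have hG1ne : ((X - C a) ^ κ * R) ≠ 0 :=
        mul_ne_zero (pow_ne_zero _ (Polynomial.X_sub_C_ne_zero a)) hR
      have hsplit : (X - C a) ^ (κ + 1) * R = (X - C a) * ((X - C a) ^ κ * R) := by
        rw [pow_succ]
        ring
      have hdeg : ((X - C a) ^ (κ + 1) * R).natDegree = ((X - C a) ^ κ * R).natDegree + 1 := by
        rw [hsplit, Polynomial.natDegree_mul (Polynomial.X_sub_C_ne_zero a) hG1ne,
          Polynomial.natDegree_X_sub_C]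
        omega
    -- stabilize N
      have hstab : Msum ((X - C a) ^ (κ + 1) * R) a u N
          = Msum ((X - C a) ^ (κ + 1) * R) a u (((X - C a) ^ κ * R).natDegree + 1 + 1) := by
        rw [Msum_stable _ a u (by omega) (le_refl _)]
        exact Msum_stable _ a u (by omega) (by omega)
      rw [hstab, hsplit, Msum_step _ a u _ (Nat.lt_succ_self _)]
      set G₁ := (X - C a) ^ κ * R with hG₁
      have hexp : ∀ j ∈ Finset.range (G₁.natDegree + 1),
          G₁.coeff j * (((j : ℂ) + 1) ^ u - (j : ℂ) ^ u) * a ^ j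
            = ∑ v ∈ Finset.range u, (u.choose v : ℂ) * (G₁.coeff j * (j : ℂ) ^ v * a ^ j) := by
        intro j _
        have hbin : ((j : ℂ) + 1) ^ u
            = ∑ v ∈ Finset.range (u + 1), (j : ℂ) ^ v * 1 ^ (u - v) * (u.choose v : ℂ) :=
          add_pow (j : ℂ) 1 u
        rw [hbin, Finset.sum_range_succ, Nat.choose_self]
        simp only [one_pow, mul_one, Nat.cast_one]
        rw [add_sub_cancel_right, Finset.mul_sum, Finset.sum_mul]
        apply Finset.sum_congr rfl
        intro v _
        ring
      rw [Finset.sum_congr rfl hexp, Finset.sum_comm]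
      have hzero : ∀ v ∈ Finset.range u,
          (∑ j ∈ Finset.range (G₁.natDegree + 1),
            (u.choose v : ℂ) * (G₁.coeff j * (j : ℂ) ^ v * a ^ j)) = 0 := by
        intro v hv
        rw [← Finset.mul_sum]
        have h0 : Msum G₁ a v (G₁.natDegree + 1) = 0 := by
          apply ih R v (G₁.natDegree + 1)
          · have := Finset.mem_range.mp hv; omega
          · rw [← hG₁]; omega
        have : (∑ j ∈ Finset.range (G₁.natDegree + 1), G₁.coeff j * (j : ℂ) ^ v * a ^ j)
            = Msum G₁ a v (G₁.natDegree + 1) := rfl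
        rw [this, h0, mul_zero]
      rw [Finset.sum_congr rfl hzero]
      simp

private lemma Msum_abs_le (h : Polynomial ℤ) (cb : ℂ) (hcb : ‖cb‖ = 1)
    (hd1 : 1 ≤ h.natDegree) (κ u : ℕ) (hu : u ≤ 2 * κ) :
    ‖Msum (h.map (Int.castRingHom ℂ)) cb u (h.natDegree + 1)‖
      ≤ (polyS h : ℝ) * (h.natDegree : ℝ) ^ (2 * κ) := by
  unfold Msum
  calc ‖∑ i ∈ Finset.range (h.natDegree + 1),
        (h.map (Int.castRingHom ℂ)).coeff i * (i : ℂ) ^ u * cb ^ i‖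
      ≤ ∑ i ∈ Finset.range (h.natDegree + 1),
          ‖(h.map (Int.castRingHom ℂ)).coeff i * (i : ℂ) ^ u * cb ^ i‖ :=
        norm_sum_le _ _
    _ ≤ ∑ i ∈ Finset.range (h.natDegree + 1),
          ((h.coeff i).natAbs : ℝ) * (h.natDegree : ℝ) ^ (2 * κ) := by
        apply Finset.sum_le_sum
        intro i hi
        rw [norm_mul, norm_mul, norm_pow, norm_pow, hcb, one_pow, mul_one, Polynomial.coeff_map]
        have e1 : ‖(Int.castRingHom ℂ) (h.coeff i)‖ = ((h.coeff i).natAbs : ℝ) := by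
          rw [show ((Int.castRingHom ℂ) (h.coeff i)) = ((h.coeff i : ℤ) : ℂ) from rfl,
            Complex.norm_intCast, Nat.cast_natAbs, Int.cast_abs]
        rw [e1, Complex.norm_natCast]
        apply mul_le_mul_of_nonneg_left _ (by positivity)
        calc (i : ℝ) ^ u ≤ (h.natDegree : ℝ) ^ u := by
              apply pow_le_pow_left₀ (by positivity)
              exact_mod_cast (by have := Finset.mem_range.mp hi; omega : i ≤ h.natDegree)
          _ ≤ (h.natDegree : ℝ) ^ (2 * κ) :=
              pow_le_pow_right₀ (by exact_mod_cast hd1) hu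
    _ = (polyS h : ℝ) * (h.natDegree : ℝ) ^ (2 * κ) := by
        rw [← Finset.sum_mul]
        congr 1
        rw [polyS_eq_sum_range (Nat.lt_succ_self _)]
        push_cast
        rfl

/-! ### The test polynomial -/

private noncomputable def Acoef (κ n j : ℕ) : ℝ :=
  ((j : ℝ) * ((n : ℝ) - (j : ℝ))) ^ κ / (n : ℝ) ^ κ

private noncomputable def fcoef (c : ℂ) (κ n j : ℕ) : ℤ :=
  round (2 * ((c ^ j).re) * Acoef κ n j)

private noncomputable def fpoly (c : ℂ) (κ n : ℕ) : Polynomial ℤ :=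
  ∑ j ∈ Finset.range n, Polynomial.C (fcoef c κ n j) * Polynomial.X ^ j

private lemma fpoly_coeff (c : ℂ) (κ n j : ℕ) :
    (fpoly c κ n).coeff j = if j < n then fcoef c κ n j else 0 := by
  unfold fpoly
  rw [Polynomial.finset_sum_coeff]
  simp only [Polynomial.coeff_C_mul, Polynomial.coeff_X_pow, mul_ite, mul_one, mul_zero]
  rw [Finset.sum_ite_eq (Finset.range n) j (fun k => fcoef c κ n k)]
  simp [Finset.mem_range]

private lemma fpoly_natDegree_lt (c : ℂ) (κ n : ℕ) (hn : 1 ≤ n) :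
    (fpoly c κ n).natDegree < n := by
  have h1 : (fpoly c κ n).natDegree ≤ n - 1 := by
    apply Polynomial.natDegree_le_iff_coeff_eq_zero.mpr
    intro N hN
    rw [fpoly_coeff, if_neg (by omega)]
  omega

/-! ### The key cancellation bound -/

private lemma Wbound (h : Polynomial ℤ) (c : ℂ) (κ n t : ℕ)
    (hc : ‖c‖ = 1) (hd1 : 1 ≤ h.natDegree) (hn : 1 ≤ n) (htn : t ≤ n)
    (hvan : ∀ u, u < κ →
      Msum (h.map (Int.castRingHom ℂ)) ((starRingEnd ℂ) c) u (h.natDegree + 1) = 0) :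
    ‖∑ i ∈ Finset.range (h.natDegree + 1),
        (h.coeff i : ℂ) * ((starRingEnd ℂ) c) ^ i *
          (((t : ℂ) - (i : ℂ)) ^ κ * (((n : ℂ) - (t : ℂ)) + (i : ℂ)) ^ κ / (n : ℂ) ^ κ)‖
      ≤ 4 ^ κ * (polyS h : ℝ) * ((h.natDegree : ℝ)) ^ (2 * κ) := by
  set d := h.natDegree with hd
  set cb := (starRingEnd ℂ) c with hcbdef
  have habs_cb : ‖cb‖ = 1 := by rw [hcbdef, Complex.norm_conj, hc]
  set coefab : ℕ → ℕ → ℂ := fun a b =>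
    (-1) ^ a * (t : ℂ) ^ (κ - a) * (κ.choose a : ℂ) * ((n : ℂ) - (t : ℂ)) ^ (κ - b)
      * (κ.choose b : ℂ) / (n : ℂ) ^ κ with hcoefab
  have step1 : ∀ i ∈ Finset.range (d + 1),
      (h.coeff i : ℂ) * cb ^ i *
          (((t : ℂ) - (i : ℂ)) ^ κ * (((n : ℂ) - (t : ℂ)) + (i : ℂ)) ^ κ / (n : ℂ) ^ κ)
        = ∑ a ∈ Finset.range (κ + 1), ∑ b ∈ Finset.range (κ + 1),
            coefab a b * ((h.coeff i : ℂ) * (i : ℂ) ^ (a + b) * cb ^ i) := by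
    intro i _
    have e1 : ((t : ℂ) - (i : ℂ)) ^ κ
        = ∑ a ∈ Finset.range (κ + 1), (-(i : ℂ)) ^ a * (t : ℂ) ^ (κ - a) * (κ.choose a : ℂ) := by
      rw [show (t : ℂ) - (i : ℂ) = -(i : ℂ) + (t : ℂ) by ring, add_pow]
    have e2 : (((n : ℂ) - (t : ℂ)) + (i : ℂ)) ^ κ
        = ∑ b ∈ Finset.range (κ + 1),
            (i : ℂ) ^ b * ((n : ℂ) - (t : ℂ)) ^ (κ - b) * (κ.choose b : ℂ) := by
      rw [show ((n : ℂ) - (t : ℂ)) + (i : ℂ) = (i : ℂ) + ((n : ℂ) - (t : ℂ)) by ring, add_pow]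
    rw [e1, e2, Finset.sum_mul_sum, Finset.sum_div, Finset.mul_sum]
    apply Finset.sum_congr rfl
    intro a _
    rw [Finset.sum_div, Finset.mul_sum]
    apply Finset.sum_congr rfl
    intro b _
    rw [hcoefab]
    have hneg : (-(i : ℂ)) ^ a = (-1) ^ a * (i : ℂ) ^ a := by
      rw [← neg_one_mul, mul_pow]
    rw [hneg, pow_add]
    ring
  rw [Finset.sum_congr rfl step1, Finset.sum_comm]
  have step2 : ∀ a ∈ Finset.range (κ + 1),
      (∑ i ∈ Finset.range (d + 1), ∑ b ∈ Finset.range (κ + 1),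
          coefab a b * ((h.coeff i : ℂ) * (i : ℂ) ^ (a + b) * cb ^ i))
        = ∑ b ∈ Finset.range (κ + 1),
            coefab a b * Msum (h.map (Int.castRingHom ℂ)) cb (a + b) (d + 1) := by
    intro a _
    rw [Finset.sum_comm]
    apply Finset.sum_congr rfl
    intro b _
    rw [← Finset.mul_sum]
    congr 1
    unfold Msum
    apply Finset.sum_congr rfl
    intro i _
    rw [Polynomial.coeff_map]
    rfl
  rw [Finset.sum_congr rfl step2]
  have hperterm : ∀ a ∈ Finset.range (κ + 1), ∀ b ∈ Finset.range (κ + 1),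
      ‖coefab a b * Msum (h.map (Int.castRingHom ℂ)) cb (a + b) (d + 1)‖
        ≤ (κ.choose a : ℝ) * (κ.choose b : ℝ) * ((polyS h : ℝ) * (d : ℝ) ^ (2 * κ)) := by
    intro a ha b hb
    have ha' : a ≤ κ := by have := Finset.mem_range.mp ha; omega
    have hb' : b ≤ κ := by have := Finset.mem_range.mp hb; omega
    rcases lt_or_ge (a + b) κ with hab | hab
    · rw [hvan (a + b) hab, mul_zero, norm_zero]
      positivity
    · rw [norm_mul]
      have h1 : ‖coefab a b‖ ≤ (κ.choose a : ℝ) * (κ.choose b : ℝ) := by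
        rw [hcoefab]
        have hnt : ((n : ℂ) - (t : ℂ)) = ((n - t : ℕ) : ℂ) := by
          push_cast [Nat.cast_sub htn]
          ring
        rw [hnt]
        rw [norm_div, norm_mul, norm_mul, norm_mul, norm_mul, norm_pow, norm_pow, norm_pow, norm_pow]
        simp only [norm_neg, norm_one, Complex.norm_natCast, one_pow, one_mul]
        have hb1 : ((n - t : ℕ) : ℝ) ^ (κ - b) ≤ (n : ℝ) ^ (κ - b) := by
          apply pow_le_pow_left₀ (by positivity)
          exact_mod_cast Nat.sub_le n t
        have ha1 : (t : ℝ) ^ (κ - a) ≤ (n : ℝ) ^ (κ - a) := by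
          apply pow_le_pow_left₀ (by positivity)
          exact_mod_cast htn
        have hprod : (t : ℝ) ^ (κ - a) * ((n - t : ℕ) : ℝ) ^ (κ - b) ≤ (n : ℝ) ^ κ := by
          calc (t : ℝ) ^ (κ - a) * ((n - t : ℕ) : ℝ) ^ (κ - b)
              ≤ (n : ℝ) ^ (κ - a) * (n : ℝ) ^ (κ - b) := by
                apply mul_le_mul ha1 hb1 (by positivity) (by positivity)
            _ = (n : ℝ) ^ ((κ - a) + (κ - b)) := by rw [pow_add]
            _ ≤ (n : ℝ) ^ κ := by
                apply pow_le_pow_right₀ (by exact_mod_cast hn)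
                omega
        rw [div_le_iff₀ (by positivity : (0:ℝ) < (n : ℝ) ^ κ)]
        have hcc : (0:ℝ) ≤ (κ.choose a : ℝ) * (κ.choose b : ℝ) := by positivity
        nlinarith [mul_le_mul_of_nonneg_left hprod hcc]
      have h2 : ‖Msum (h.map (Int.castRingHom ℂ)) cb (a + b) (d + 1)‖
          ≤ (polyS h : ℝ) * (d : ℝ) ^ (2 * κ) :=
        Msum_abs_le h cb habs_cb hd1 κ (a + b) (by omega)
      calc ‖coefab a b‖
            * ‖Msum (h.map (Int.castRingHom ℂ)) cb (a + b) (d + 1)‖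
          ≤ ((κ.choose a : ℝ) * (κ.choose b : ℝ)) * ((polyS h : ℝ) * (d : ℝ) ^ (2 * κ)) := by
            apply mul_le_mul h1 h2 (norm_nonneg _) (by positivity)
        _ = (κ.choose a : ℝ) * (κ.choose b : ℝ) * ((polyS h : ℝ) * (d : ℝ) ^ (2 * κ)) := by ring
  calc ‖∑ a ∈ Finset.range (κ + 1), ∑ b ∈ Finset.range (κ + 1),
          coefab a b * Msum (h.map (Int.castRingHom ℂ)) cb (a + b) (d + 1)‖
      ≤ ∑ a ∈ Finset.range (κ + 1), ‖∑ b ∈ Finset.range (κ + 1),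
          coefab a b * Msum (h.map (Int.castRingHom ℂ)) cb (a + b) (d + 1)‖ :=
        norm_sum_le _ _
    _ ≤ ∑ a ∈ Finset.range (κ + 1), ∑ b ∈ Finset.range (κ + 1),
          ‖coefab a b * Msum (h.map (Int.castRingHom ℂ)) cb (a + b) (d + 1)‖ :=
        Finset.sum_le_sum (fun a _ => norm_sum_le _ _)
    _ ≤ ∑ a ∈ Finset.range (κ + 1), ∑ b ∈ Finset.range (κ + 1),
          (κ.choose a : ℝ) * (κ.choose b : ℝ) * ((polyS h : ℝ) * (d : ℝ) ^ (2 * κ)) := by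
        apply Finset.sum_le_sum
        intro a ha
        apply Finset.sum_le_sum
        intro b hb
        exact hperterm a ha b hb
    _ = 4 ^ κ * (polyS h : ℝ) * (d : ℝ) ^ (2 * κ) := by
        have hch : ∑ a ∈ Finset.range (κ + 1), (κ.choose a : ℝ) = 2 ^ κ := by
          rw [← Nat.cast_sum]
          rw [Nat.sum_range_choose]
          push_cast
          ring
        have hswap : ∀ a ∈ Finset.range (κ + 1),
            (∑ b ∈ Finset.range (κ + 1),
              (κ.choose a : ℝ) * (κ.choose b : ℝ) * ((polyS h : ℝ) * (d : ℝ) ^ (2 * κ)))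
              = (κ.choose a : ℝ) * (2 ^ κ * ((polyS h : ℝ) * (d : ℝ) ^ (2 * κ))) := by
          intro a _
          calc (∑ b ∈ Finset.range (κ + 1),
                (κ.choose a : ℝ) * (κ.choose b : ℝ) * ((polyS h : ℝ) * (d : ℝ) ^ (2 * κ)))
              = (∑ b ∈ Finset.range (κ + 1), (κ.choose b : ℝ))
                  * ((κ.choose a : ℝ) * ((polyS h : ℝ) * (d : ℝ) ^ (2 * κ))) := by
                rw [Finset.sum_mul]
                apply Finset.sum_congr rfl
                intro b _
                ring
            _ = (κ.choose a : ℝ) * (2 ^ κ * ((polyS h : ℝ) * (d : ℝ) ^ (2 * κ))) := by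
                rw [hch]
                ring
        rw [Finset.sum_congr rfl hswap, ← Finset.sum_mul, hch]
        rw [show (4:ℝ) = 2 * 2 by norm_num, mul_pow]
        ring

/-! ### Coefficient bounds for `h * fpoly` -/

private lemma interior_bound (h : Polynomial ℤ) (c : ℂ) (κ n t : ℕ)
    (hc : ‖c‖ = 1) (hd1 : 1 ≤ h.natDegree) (hn : 1 ≤ n)
    (hvan : ∀ u, u < κ →
      Msum (h.map (Int.castRingHom ℂ)) ((starRingEnd ℂ) c) u (h.natDegree + 1) = 0)
    (hdt : h.natDegree ≤ t) (htn : t < n) :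
    |(((h * fpoly c κ n).coeff t : ℤ) : ℝ)|
      ≤ 2 * (4 ^ κ * (polyS h : ℝ) * (h.natDegree : ℝ) ^ (2 * κ)) + (polyS h : ℝ) := by
  set d := h.natDegree with hd
  set cb := (starRingEnd ℂ) c with hcbdef
  have hcoeff : (h * fpoly c κ n).coeff t
      = ∑ i ∈ Finset.range (d + 1), h.coeff i * (fpoly c κ n).coeff (t - i) := by
    rw [Polynomial.coeff_mul, Finset.Nat.sum_antidiagonal_eq_sum_range_succ_mk]
    symm
    apply Finset.sum_subset (Finset.range_subset_range.mpr (by omega))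
    intro k hk1 hk2
    have hk : d < k := by
      simp only [Finset.mem_range] at hk1 hk2
      omega
    rw [Polynomial.coeff_eq_zero_of_natDegree_lt hk, zero_mul]
  have hfc : ∀ i ∈ Finset.range (d + 1),
      (fpoly c κ n).coeff (t - i) = fcoef c κ n (t - i) := by
    intro i _
    rw [fpoly_coeff, if_pos (by omega)]
  have hreal : (((h * fpoly c κ n).coeff t : ℤ) : ℝ)
      = ∑ i ∈ Finset.range (d + 1), (h.coeff i : ℝ) * ((fcoef c κ n (t - i) : ℤ) : ℝ) := by
    rw [hcoeff]
    push_cast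
    apply Finset.sum_congr rfl
    intro i hi
    rw [hfc i hi]
  set Z : ℂ := ∑ i ∈ Finset.range (d + 1),
      (((h.coeff i : ℝ) * Acoef κ n (t - i) : ℝ) : ℂ) * c ^ (t - i) with hZ
  have hmain : (∑ i ∈ Finset.range (d + 1),
      (h.coeff i : ℝ) * (2 * ((c ^ (t - i)).re) * Acoef κ n (t - i))) = 2 * Z.re := by
    rw [hZ, Complex.re_sum, Finset.mul_sum]
    apply Finset.sum_congr rfl
    intro i _
    rw [Complex.re_ofReal_mul]
    ring
  have hsplit : (((h * fpoly c κ n).coeff t : ℤ) : ℝ)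
      = 2 * Z.re + ∑ i ∈ Finset.range (d + 1),
          (h.coeff i : ℝ) * (((fcoef c κ n (t - i) : ℤ) : ℝ)
            - 2 * ((c ^ (t - i)).re) * Acoef κ n (t - i)) := by
    rw [hreal, ← hmain, ← Finset.sum_add_distrib]
    apply Finset.sum_congr rfl
    intro i _
    ring
  rw [hsplit]
  have hShsum : ∑ i ∈ Finset.range (d + 1), |((h.coeff i : ℤ) : ℝ)| = (polyS h : ℝ) := by
    rw [polyS_eq_sum_range (Nat.lt_succ_self d)]
    push_cast [Nat.cast_natAbs]
    rfl
  have herr : |∑ i ∈ Finset.range (d + 1),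
      (h.coeff i : ℝ) * (((fcoef c κ n (t - i) : ℤ) : ℝ)
        - 2 * ((c ^ (t - i)).re) * Acoef κ n (t - i))| ≤ (polyS h : ℝ) := by
    calc |∑ i ∈ Finset.range (d + 1),
        (h.coeff i : ℝ) * (((fcoef c κ n (t - i) : ℤ) : ℝ)
          - 2 * ((c ^ (t - i)).re) * Acoef κ n (t - i))|
        ≤ ∑ i ∈ Finset.range (d + 1), |(h.coeff i : ℝ) * (((fcoef c κ n (t - i) : ℤ) : ℝ)
            - 2 * ((c ^ (t - i)).re) * Acoef κ n (t - i))| := Finset.abs_sum_le_sum_abs _ _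
      _ ≤ ∑ i ∈ Finset.range (d + 1), |((h.coeff i : ℤ) : ℝ)| * (1 / 2) := by
          apply Finset.sum_le_sum
          intro i _
          rw [abs_mul]
          apply mul_le_mul_of_nonneg_left _ (abs_nonneg _)
          unfold fcoef
          rw [abs_sub_comm]
          exact abs_sub_round _
      _ = (polyS h : ℝ) * (1 / 2) := by rw [← Finset.sum_mul, hShsum]
      _ ≤ (polyS h : ℝ) := by
          have : (0:ℝ) ≤ (polyS h : ℝ) := by positivity
          linarith
  have hZW : ‖Z‖ ≤ 4 ^ κ * (polyS h : ℝ) * (d : ℝ) ^ (2 * κ) := by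
    have hZeq : Z = c ^ t * (∑ i ∈ Finset.range (d + 1),
        (h.coeff i : ℂ) * cb ^ i *
          (((t : ℂ) - (i : ℂ)) ^ κ * (((n : ℂ) - (t : ℂ)) + (i : ℂ)) ^ κ / (n : ℂ) ^ κ)) := by
      rw [hZ, Finset.mul_sum]
      apply Finset.sum_congr rfl
      intro i hi
      have hit : i ≤ t := by
        have := Finset.mem_range.mp hi
        omega
      have h1 : c * cb = 1 := by
        rw [hcbdef, Complex.mul_conj, Complex.normSq_eq_norm_sq, hc]
        norm_num
      have hpow : c ^ (t - i) = c ^ t * cb ^ i := by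
        have h2 : c ^ t = c ^ (t - i) * c ^ i := by
          rw [← pow_add, Nat.sub_add_cancel hit]
        calc c ^ (t - i) = c ^ (t - i) * (c * cb) ^ i := by rw [h1, one_pow, mul_one]
          _ = (c ^ (t - i) * c ^ i) * cb ^ i := by rw [mul_pow]; ring
          _ = c ^ t * cb ^ i := by rw [← h2]
      have hA : ((Acoef κ n (t - i) : ℝ) : ℂ)
          = ((t : ℂ) - (i : ℂ)) ^ κ * (((n : ℂ) - (t : ℂ)) + (i : ℂ)) ^ κ / (n : ℂ) ^ κ := by
        unfold Acoef
        have hcast : ((t - i : ℕ) : ℝ) = (t : ℝ) - (i : ℝ) := Nat.cast_sub hit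
        rw [hcast, show (n:ℝ) - ((t:ℝ) - (i:ℝ)) = ((n:ℝ) - (t:ℝ)) + (i:ℝ) by ring, mul_pow]
        push_cast
        ring
      rw [hpow, Complex.ofReal_mul, hA]
      push_cast
      ring
    rw [hZeq, norm_mul, norm_pow, hc, one_pow, one_mul]
    exact Wbound h c κ n t hc hd1 hn (le_of_lt htn) hvan
  calc |2 * Z.re + ∑ i ∈ Finset.range (d + 1),
        (h.coeff i : ℝ) * (((fcoef c κ n (t - i) : ℤ) : ℝ)
          - 2 * ((c ^ (t - i)).re) * Acoef κ n (t - i))|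
      ≤ |2 * Z.re| + |∑ i ∈ Finset.range (d + 1),
          (h.coeff i : ℝ) * (((fcoef c κ n (t - i) : ℤ) : ℝ)
            - 2 * ((c ^ (t - i)).re) * Acoef κ n (t - i))| := abs_add_le _ _
    _ ≤ 2 * (4 ^ κ * (polyS h : ℝ) * (d : ℝ) ^ (2 * κ)) + (polyS h : ℝ) := by
        apply add_le_add _ herr
        rw [abs_mul, abs_two]
        exact mul_le_mul_of_nonneg_left (le_trans (Complex.abs_re_le_norm Z) hZW) (by norm_num)

private lemma boundary_bound (h : Polynomial ℤ) (c : ℂ) (κ n t : ℕ)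
    (hc : ‖c‖ = 1) (hn : 1 ≤ n) (ht : t < h.natDegree ∨ n ≤ t) :
    |(((h * fpoly c κ n).coeff t : ℤ) : ℝ)|
      ≤ (polyS h : ℝ) * (2 * (h.natDegree : ℝ) ^ κ + 1) := by
  set d := h.natDegree with hd
  have hcoeff : (h * fpoly c κ n).coeff t
      = ∑ k ∈ Finset.range (t + 1), h.coeff k * (fpoly c κ n).coeff (t - k) := by
    rw [Polynomial.coeff_mul, Finset.Nat.sum_antidiagonal_eq_sum_range_succ_mk]
  have hre1 : ∀ j : ℕ, |(c ^ j).re| ≤ 1 := by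
    intro j
    calc |(c ^ j).re| ≤ ‖c ^ j‖ := Complex.abs_re_le_norm _
      _ = 1 := by rw [norm_pow, hc, one_pow]
  have hkey : ∀ k ∈ Finset.range (t + 1),
      |((h.coeff k * (fpoly c κ n).coeff (t - k) : ℤ) : ℝ)|
        ≤ ((h.coeff k).natAbs : ℝ) * (2 * (d : ℝ) ^ κ + 1) := by
    intro k hk
    rcases eq_or_ne (h.coeff k) 0 with h0 | h0
    · rw [h0]
      simp
    · have hkd : k ≤ d := Polynomial.le_natDegree_of_ne_zero h0
      have hkt : k ≤ t := by
        have := Finset.mem_range.mp hk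
        omega
      have hfb : |(((fpoly c κ n).coeff (t - k) : ℤ) : ℝ)| ≤ 2 * (d : ℝ) ^ κ + 1 := by
        set j := t - k with hjdef
        rcases lt_or_ge j n with hjn | hjn
        · rw [fpoly_coeff, if_pos hjn]
          have hA0 : 0 ≤ Acoef κ n j := by
            unfold Acoef
            have hj : (j : ℝ) ≤ (n : ℝ) := by exact_mod_cast hjn.le
            have : (0:ℝ) ≤ (j : ℝ) * ((n : ℝ) - (j : ℝ)) := by
              apply mul_nonneg (by positivity)
              linarith
            positivity
          have hAle : Acoef κ n j ≤ (d : ℝ) ^ κ := by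
            unfold Acoef
            have hnpos : (0:ℝ) < (n : ℝ) ^ κ := by positivity
            rcases ht with htl | htg
            · -- j ≤ t < d
              have hjd : (j : ℝ) ≤ (d : ℝ) := by
                have : j ≤ d := by omega
                exact_mod_cast this
              have hnj : (n : ℝ) - (j : ℝ) ≤ (n : ℝ) := by
                have : (0:ℝ) ≤ (j : ℝ) := by positivity
                linarith
              have h1 : (j : ℝ) * ((n : ℝ) - (j : ℝ)) ≤ (d : ℝ) * (n : ℝ) := by
                apply mul_le_mul hjd hnj _ (by positivity)
                have hj : (j : ℝ) ≤ (n : ℝ) := by exact_mod_cast hjn.le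
                linarith
              have h2 : ((j : ℝ) * ((n : ℝ) - (j : ℝ))) ^ κ ≤ ((d : ℝ) * (n : ℝ)) ^ κ := by
                apply pow_le_pow_left₀ _ h1
                apply mul_nonneg (by positivity)
                have hj : (j : ℝ) ≤ (n : ℝ) := by exact_mod_cast hjn.le
                linarith
              calc ((j : ℝ) * ((n : ℝ) - (j : ℝ))) ^ κ / (n : ℝ) ^ κ
                  ≤ ((d : ℝ) * (n : ℝ)) ^ κ / (n : ℝ) ^ κ := by
                    exact (div_le_div_iff_of_pos_right hnpos).mpr h2
                _ = (d : ℝ) ^ κ := by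
                    rw [mul_pow, mul_div_assoc, div_self (ne_of_gt hnpos), mul_one]
            · -- n ≤ t, so n - j ≤ k ≤ d
              have hcast : (j : ℝ) = (t : ℝ) - (k : ℝ) := by
                rw [hjdef]
                exact Nat.cast_sub hkt
              have hnt : (n : ℝ) ≤ (t : ℝ) := by exact_mod_cast htg
              have hkdr : (k : ℝ) ≤ (d : ℝ) := by exact_mod_cast hkd
              have hnj : (n : ℝ) - (j : ℝ) ≤ (d : ℝ) := by
                rw [hcast]
                linarith
              have hj : (j : ℝ) ≤ (n : ℝ) := by exact_mod_cast hjn.le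
              have h1 : (j : ℝ) * ((n : ℝ) - (j : ℝ)) ≤ (n : ℝ) * (d : ℝ) := by
                apply mul_le_mul hj hnj (by linarith) (by positivity)
              have h2 : ((j : ℝ) * ((n : ℝ) - (j : ℝ))) ^ κ ≤ ((n : ℝ) * (d : ℝ)) ^ κ := by
                apply pow_le_pow_left₀ _ h1
                apply mul_nonneg (by positivity)
                linarith
              calc ((j : ℝ) * ((n : ℝ) - (j : ℝ))) ^ κ / (n : ℝ) ^ κ
                  ≤ ((n : ℝ) * (d : ℝ)) ^ κ / (n : ℝ) ^ κ := by
                    exact (div_le_div_iff_of_pos_right hnpos).mpr h2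
                _ = (d : ℝ) ^ κ := by
                    rw [mul_pow, mul_comm ((n:ℝ)^κ), mul_div_assoc, div_self (ne_of_gt hnpos),
                      mul_one]
          unfold fcoef
          set x := 2 * ((c ^ j).re) * Acoef κ n j with hx
          have hxb : |x| ≤ 2 * (d : ℝ) ^ κ := by
            rw [hx, abs_mul, abs_mul]
            have h2 : |(2:ℝ)| = 2 := by norm_num
            rw [h2, abs_of_nonneg hA0]
            calc 2 * |(c ^ j).re| * Acoef κ n j ≤ 2 * 1 * (d : ℝ) ^ κ := by
                  apply mul_le_mul _ hAle hA0 (by norm_num)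
                  have := hre1 j
                  nlinarith
              _ = 2 * (d : ℝ) ^ κ := by ring
          have h4 : ((round x : ℤ) : ℝ) = x - (x - ((round x : ℤ) : ℝ)) := by ring
          calc |((round x : ℤ) : ℝ)| = |x - (x - ((round x : ℤ) : ℝ))| := by rw [← h4]
            _ ≤ |x| + |x - ((round x : ℤ) : ℝ)| := abs_sub _ _
            _ ≤ 2 * (d : ℝ) ^ κ + 1 := by
                have h3 : |x - ((round x : ℤ) : ℝ)| ≤ 1 / 2 := abs_sub_round x
                linarith [hxb]
        · rw [fpoly_coeff, if_neg (by omega)]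
          simp
          positivity
      calc |((h.coeff k * (fpoly c κ n).coeff (t - k) : ℤ) : ℝ)|
          = |((h.coeff k : ℤ) : ℝ)| * |(((fpoly c κ n).coeff (t - k) : ℤ) : ℝ)| := by
            push_cast
            rw [abs_mul]
        _ ≤ ((h.coeff k).natAbs : ℝ) * (2 * (d : ℝ) ^ κ + 1) := by
            rw [Nat.cast_natAbs, Int.cast_abs]
            apply mul_le_mul_of_nonneg_left hfb (abs_nonneg _)
  calc |(((h * fpoly c κ n).coeff t : ℤ) : ℝ)|
      = |∑ k ∈ Finset.range (t + 1), ((h.coeff k * (fpoly c κ n).coeff (t - k) : ℤ) : ℝ)| := by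
        rw [hcoeff]
        push_cast
        rfl
    _ ≤ ∑ k ∈ Finset.range (t + 1),
          |((h.coeff k * (fpoly c κ n).coeff (t - k) : ℤ) : ℝ)| :=
        Finset.abs_sum_le_sum_abs _ _
    _ ≤ ∑ k ∈ Finset.range (t + 1), ((h.coeff k).natAbs : ℝ) * (2 * (d : ℝ) ^ κ + 1) :=
        Finset.sum_le_sum hkey
    _ = (∑ k ∈ Finset.range (t + 1), ((h.coeff k).natAbs : ℝ)) * (2 * (d : ℝ) ^ κ + 1) := by
        rw [Finset.sum_mul]
    _ ≤ (polyS h : ℝ) * (2 * (d : ℝ) ^ κ + 1) := by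
        apply mul_le_mul_of_nonneg_right _ (by positivity)
        have := sum_range_natAbs_le_polyS h (t + 1)
        calc (∑ k ∈ Finset.range (t + 1), ((h.coeff k).natAbs : ℝ))
            = ((∑ k ∈ Finset.range (t + 1), (h.coeff k).natAbs : ℕ) : ℝ) := by push_cast; rfl
          _ ≤ (polyS h : ℝ) := by exact_mod_cast this

private lemma polyS_mul_fpoly_le (h : Polynomial ℤ) (c : ℂ) (κ n : ℕ)
    (hc : ‖c‖ = 1) (hd1 : 1 ≤ h.natDegree) (hn : 1 ≤ n)
    (hvan : ∀ u, u < κ →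
      Msum (h.map (Int.castRingHom ℂ)) ((starRingEnd ℂ) c) u (h.natDegree + 1) = 0) :
    (polyS (h * fpoly c κ n) : ℝ)
      ≤ ((n : ℝ) + (h.natDegree : ℝ)) *
        (2 * (4 ^ κ * (polyS h : ℝ) * (h.natDegree : ℝ) ^ (2 * κ))
          + (polyS h : ℝ) * (2 * (h.natDegree : ℝ) ^ κ + 1)) := by
  set d := h.natDegree with hd
  set CB : ℝ := 2 * (4 ^ κ * (polyS h : ℝ) * (d : ℝ) ^ (2 * κ))
      + (polyS h : ℝ) * (2 * (d : ℝ) ^ κ + 1) with hCB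
  have hdeg : (h * fpoly c κ n).natDegree < n + d := by
    have h1 : (h * fpoly c κ n).natDegree ≤ d + (fpoly c κ n).natDegree :=
      Polynomial.natDegree_mul_le
    have h2 : (fpoly c κ n).natDegree < n := fpoly_natDegree_lt c κ n hn
    omega
  have hbound : ∀ t ∈ Finset.range (n + d),
      (((h * fpoly c κ n).coeff t).natAbs : ℝ) ≤ CB := by
    intro t _
    rw [Nat.cast_natAbs, Int.cast_abs]
    rcases lt_or_ge t d with htd | htd
    · calc |(((h * fpoly c κ n).coeff t : ℤ) : ℝ)|
          ≤ (polyS h : ℝ) * (2 * (d : ℝ) ^ κ + 1) :=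
            boundary_bound h c κ n t hc hn (Or.inl htd)
        _ ≤ CB := by
            rw [hCB]
            have : (0:ℝ) ≤ 2 * (4 ^ κ * (polyS h : ℝ) * (d : ℝ) ^ (2 * κ)) := by positivity
            linarith
    · rcases lt_or_ge t n with htn | htn
      · calc |(((h * fpoly c κ n).coeff t : ℤ) : ℝ)|
            ≤ 2 * (4 ^ κ * (polyS h : ℝ) * (d : ℝ) ^ (2 * κ)) + (polyS h : ℝ) :=
              interior_bound h c κ n t hc hd1 hn hvan htd htn
          _ ≤ CB := by
              rw [hCB]
              have h1 : (polyS h : ℝ) ≤ (polyS h : ℝ) * (2 * (d : ℝ) ^ κ + 1) := by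
                have h2 : (0:ℝ) ≤ (polyS h : ℝ) := by positivity
                have h3 : (0:ℝ) ≤ (d : ℝ) ^ κ := by positivity
                nlinarith
              linarith
      · calc |(((h * fpoly c κ n).coeff t : ℤ) : ℝ)|
            ≤ (polyS h : ℝ) * (2 * (d : ℝ) ^ κ + 1) :=
              boundary_bound h c κ n t hc hn (Or.inr htn)
          _ ≤ CB := by
              rw [hCB]
              have : (0:ℝ) ≤ 2 * (4 ^ κ * (polyS h : ℝ) * (d : ℝ) ^ (2 * κ)) := by positivity
              linarith
  calc (polyS (h * fpoly c κ n) : ℝ)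
      = ∑ t ∈ Finset.range (n + d), (((h * fpoly c κ n).coeff t).natAbs : ℝ) := by
        rw [polyS_eq_sum_range hdeg]
        push_cast
        rfl
    _ ≤ ∑ t ∈ Finset.range (n + d), CB := Finset.sum_le_sum hbound
    _ = ((n : ℝ) + (d : ℝ)) * CB := by
        rw [Finset.sum_const, Finset.card_range, nsmul_eq_mul]
        push_cast
        ring

/-! ### Lower bound for `polyS (fpoly)` -/

private noncomputable def rhoC (c : ℂ) : ℝ := if c.im = 0 then 1 else |c.im|

private lemma rhoC_pos (c : ℂ) : 0 < rhoC c := by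
  unfold rhoC
  split_ifs with him
  · norm_num
  · exact abs_pos.mpr him

private lemma pair_re (c : ℂ) (hc : ‖c‖ = 1) (j : ℕ) :
    rhoC c ≤ |(c ^ j).re| + |(c ^ (j + 1)).re| := by
  unfold rhoC
  split_ifs with him
  · have hcj : (c ^ j).im = 0 := by
      have h1 : (starRingEnd ℂ) c = c := Complex.conj_eq_iff_im.mpr him
      have h2 : (starRingEnd ℂ) (c ^ j) = c ^ j := by rw [map_pow, h1]
      exact Complex.conj_eq_iff_im.mp h2
    have h3 : ‖c ^ j‖ = 1 := by rw [norm_pow, hc, one_pow]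
    have h4 : (c ^ j) = (((c ^ j).re : ℝ) : ℂ) := by
      apply Complex.ext
      · rfl
      · rw [hcj, Complex.ofReal_im]
    rw [h4, Complex.norm_real, Real.norm_eq_abs] at h3
    calc (1:ℝ) = |(c ^ j).re| := h3.symm
      _ ≤ |(c ^ j).re| + |(c ^ (j + 1)).re| := by linarith [abs_nonneg (c ^ (j + 1)).re]
  · have h1 : c ^ j * (starRingEnd ℂ) (c ^ j) = 1 := by
      rw [Complex.mul_conj, Complex.normSq_eq_norm_sq, norm_pow, hc, one_pow]
      norm_num
    have h2 : c = c ^ (j + 1) * (starRingEnd ℂ) (c ^ j) := by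
      calc c = (c ^ j * (starRingEnd ℂ) (c ^ j)) * c := by rw [h1, one_mul]
        _ = (c ^ j * c) * (starRingEnd ℂ) (c ^ j) := by ring
        _ = c ^ (j + 1) * (starRingEnd ℂ) (c ^ j) := by rw [← pow_succ]
    have h3 : c.im = (c ^ (j + 1)).re * (-(c ^ j).im) + (c ^ (j + 1)).im * (c ^ j).re := by
      calc c.im = (c ^ (j + 1) * (starRingEnd ℂ) (c ^ j)).im := by rw [← h2]
        _ = (c ^ (j + 1)).re * ((starRingEnd ℂ) (c ^ j)).im
            + (c ^ (j + 1)).im * ((starRingEnd ℂ) (c ^ j)).re := Complex.mul_im _ _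
        _ = (c ^ (j + 1)).re * (-(c ^ j).im) + (c ^ (j + 1)).im * (c ^ j).re := by
            rw [Complex.conj_im, Complex.conj_re]
    have h4 : ∀ N : ℕ, |(c ^ N).im| ≤ 1 := by
      intro N
      calc |(c ^ N).im| ≤ ‖c ^ N‖ := Complex.abs_im_le_norm _
        _ = 1 := by rw [norm_pow, hc, one_pow]
    have h5 : ∀ N : ℕ, |(c ^ N).re| ≤ 1 := by
      intro N
      calc |(c ^ N).re| ≤ ‖c ^ N‖ := Complex.abs_re_le_norm _
        _ = 1 := by rw [norm_pow, hc, one_pow]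
    calc |c.im| = |(c ^ (j + 1)).re * (-(c ^ j).im) + (c ^ (j + 1)).im * (c ^ j).re| := by
          rw [h3]
      _ ≤ |(c ^ (j + 1)).re * (-(c ^ j).im)| + |(c ^ (j + 1)).im * (c ^ j).re| := abs_add_le _ _
      _ = |(c ^ (j + 1)).re| * |(c ^ j).im| + |(c ^ (j + 1)).im| * |(c ^ j).re| := by
          rw [abs_mul, abs_mul, abs_neg]
      _ ≤ |(c ^ (j + 1)).re| * 1 + 1 * |(c ^ j).re| := by
          apply add_le_add
          · exact mul_le_mul_of_nonneg_left (h4 j) (abs_nonneg _)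
          · exact mul_le_mul_of_nonneg_right (h4 (j + 1)) (abs_nonneg _)
      _ = |(c ^ j).re| + |(c ^ (j + 1)).re| := by ring

private lemma sum_range_two_mul (m : ℕ) (F : ℕ → ℝ) :
    ∑ k ∈ Finset.range (2 * m), F k = ∑ k ∈ Finset.range m, (F (2 * k) + F (2 * k + 1)) := by
  induction m with
  | zero => simp
  | succ m ih =>
    rw [Finset.sum_range_succ, ← ih, show 2 * (m + 1) = 2 * m + 1 + 1 by ring,
      Finset.sum_range_succ, Finset.sum_range_succ]
    ring

private lemma polyS_fpoly_ge (c : ℂ) (hc : ‖c‖ = 1) (κ m : ℕ) (hm : 1 ≤ m) :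
    2 * rhoC c / 4 ^ κ * (m : ℝ) ^ (κ + 1) - (m : ℝ) ≤ (polyS (fpoly c κ (4 * m)) : ℝ) := by
  set n := 4 * m with hn
  have hnm : 1 ≤ n := by omega
  have h0 : ∑ j ∈ Finset.Ico m (3 * m), ((fpoly c κ n).coeff j).natAbs
      ≤ polyS (fpoly c κ n) := by
    rw [polyS_eq_sum_range (fpoly_natDegree_lt c κ n hnm)]
    apply Finset.sum_le_sum_of_subset
    intro j hj
    simp only [Finset.mem_Ico, Finset.mem_range] at *
    omega
  have h1 : ∀ j ∈ Finset.Ico m (3 * m),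
      2 * |(c ^ j).re| * ((m : ℝ) ^ κ / 4 ^ κ) - 1 / 2
        ≤ ((((fpoly c κ n).coeff j).natAbs : ℕ) : ℝ) := by
    intro j hj
    rw [Finset.mem_Ico] at hj
    rw [fpoly_coeff, if_pos (by omega)]
    unfold fcoef
    have hA : (m : ℝ) ^ κ / 4 ^ κ ≤ Acoef κ n j := by
      unfold Acoef
      have hj1 : (m : ℝ) ≤ (j : ℝ) := by exact_mod_cast hj.1
      have hj2 : (m : ℝ) ≤ (n : ℝ) - (j : ℝ) := by
        have hjm : (j : ℝ) + (m : ℝ) < (n : ℝ) := by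
          have : j + m < n := by omega
          exact_mod_cast this
        linarith
      have hm0 : (0:ℝ) ≤ (m : ℝ) := by positivity
      have hprod : (m : ℝ) * (m : ℝ) ≤ (j : ℝ) * ((n : ℝ) - (j : ℝ)) :=
        mul_le_mul hj1 hj2 hm0 (by positivity)
      have h2 : ((m : ℝ) * (m : ℝ)) ^ κ ≤ ((j : ℝ) * ((n : ℝ) - (j : ℝ))) ^ κ :=
        pow_le_pow_left₀ (by positivity) hprod κ
      have h3 : ((m : ℝ) * (m : ℝ)) ^ κ / (n : ℝ) ^ κ = (m : ℝ) ^ κ / 4 ^ κ := by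
        rw [hn]
        push_cast
        rw [mul_pow, mul_pow]
        have hmne : (m : ℝ) ^ κ ≠ 0 := by positivity
        field_simp
      calc (m : ℝ) ^ κ / 4 ^ κ = ((m : ℝ) * (m : ℝ)) ^ κ / (n : ℝ) ^ κ := h3.symm
        _ ≤ ((j : ℝ) * ((n : ℝ) - (j : ℝ))) ^ κ / (n : ℝ) ^ κ := by
            apply (div_le_div_iff_of_pos_right (by positivity)).mpr h2
    have hA0 : 0 ≤ Acoef κ n j := le_trans (by positivity) hA
    set x := 2 * ((c ^ j).re) * Acoef κ n j with hx
    have habsx : |x| = 2 * |(c ^ j).re| * Acoef κ n j := by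
      rw [hx, abs_mul, abs_mul, abs_of_nonneg hA0]
      norm_num
    have hroundlb : |x| - 1 / 2 ≤ |((round x : ℤ) : ℝ)| := by
      have h5 : |x - ((round x : ℤ) : ℝ)| ≤ 1 / 2 := abs_sub_round x
      have h6 : |x| ≤ |x - ((round x : ℤ) : ℝ)| + |((round x : ℤ) : ℝ)| := by
        calc |x| = |(x - ((round x : ℤ) : ℝ)) + ((round x : ℤ) : ℝ)| := by ring_nf
          _ ≤ |x - ((round x : ℤ) : ℝ)| + |((round x : ℤ) : ℝ)| := abs_add_le _ _
      linarith
    have hnatabs : (((round x : ℤ).natAbs : ℕ) : ℝ) = |((round x : ℤ) : ℝ)| := by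
      rw [Nat.cast_natAbs, Int.cast_abs]
    rw [hnatabs]
    have hmono : 2 * |(c ^ j).re| * ((m : ℝ) ^ κ / 4 ^ κ) ≤ 2 * |(c ^ j).re| * Acoef κ n j := by
      apply mul_le_mul_of_nonneg_left hA (by positivity)
    calc 2 * |(c ^ j).re| * ((m : ℝ) ^ κ / 4 ^ κ) - 1 / 2
        ≤ 2 * |(c ^ j).re| * Acoef κ n j - 1 / 2 := by linarith
      _ = |x| - 1 / 2 := by rw [habsx]
      _ ≤ |((round x : ℤ) : ℝ)| := hroundlb
  have h4 : (m : ℝ) * rhoC c ≤ ∑ j ∈ Finset.Ico m (3 * m), |(c ^ j).re| := by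
    rw [Finset.sum_Ico_eq_sum_range, show 3 * m - m = 2 * m by omega,
      sum_range_two_mul m (fun k => |(c ^ (m + k)).re|)]
    calc (m : ℝ) * rhoC c = ∑ _k ∈ Finset.range m, rhoC c := by
          rw [Finset.sum_const, Finset.card_range, nsmul_eq_mul]
      _ ≤ ∑ k ∈ Finset.range m, (|(c ^ (m + 2 * k)).re| + |(c ^ (m + 2 * k + 1)).re|) := by
          apply Finset.sum_le_sum
          intro k _
          have := pair_re c hc (m + 2 * k)
          simpa using this
  have h5 : ∑ j ∈ Finset.Ico m (3 * m),
      (2 * |(c ^ j).re| * ((m : ℝ) ^ κ / 4 ^ κ) - 1 / 2)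
        = 2 * ((m : ℝ) ^ κ / 4 ^ κ) * (∑ j ∈ Finset.Ico m (3 * m), |(c ^ j).re|) - (m : ℝ) := by
    rw [Finset.sum_sub_distrib]
    congr 1
    · rw [Finset.mul_sum]
      apply Finset.sum_congr rfl
      intro j _
      ring
    · rw [Finset.sum_const, Nat.card_Ico, show 3 * m - m = 2 * m by omega, nsmul_eq_mul]
      push_cast
      ring
  calc 2 * rhoC c / 4 ^ κ * (m : ℝ) ^ (κ + 1) - (m : ℝ)
      = 2 * ((m : ℝ) ^ κ / 4 ^ κ) * ((m : ℝ) * rhoC c) - (m : ℝ) := by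
        rw [pow_succ]
        ring
    _ ≤ 2 * ((m : ℝ) ^ κ / 4 ^ κ) * (∑ j ∈ Finset.Ico m (3 * m), |(c ^ j).re|) - (m : ℝ) := by
        have := mul_le_mul_of_nonneg_left h4 (by positivity : (0:ℝ) ≤ 2 * ((m : ℝ) ^ κ / 4 ^ κ))
        linarith
    _ = ∑ j ∈ Finset.Ico m (3 * m), (2 * |(c ^ j).re| * ((m : ℝ) ^ κ / 4 ^ κ) - 1 / 2) :=
        h5.symm
    _ ≤ ∑ j ∈ Finset.Ico m (3 * m), ((((fpoly c κ n).coeff j).natAbs : ℕ) : ℝ) :=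
        Finset.sum_le_sum h1
    _ ≤ (polyS (fpoly c κ n) : ℝ) := by
        calc ∑ j ∈ Finset.Ico m (3 * m), ((((fpoly c κ n).coeff j).natAbs : ℕ) : ℝ)
            = ((∑ j ∈ Finset.Ico m (3 * m), ((fpoly c κ n).coeff j).natAbs : ℕ) : ℝ) := by
              push_cast
              rfl
          _ ≤ (polyS (fpoly c κ n) : ℝ) := by exact_mod_cast h0
/-- If `c ∈ ℂ` has modulus one and `(x - c)^κ` divides `h` in `ℂ[x]`
(`κ ≥ 1`), then `Δ_h(l) ⪰ l^{κ+1}`. -/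
theorem statement13 (h : Polynomial ℤ) (hh : h ≠ 0) (c : ℂ) (hc : ‖c‖ = 1)
    (κ : ℕ) (hκ : 1 ≤ κ)
    (hdvd : (Polynomial.X - Polynomial.C c) ^ κ ∣ h.map (Int.castRingHom ℂ)) :
    Dominates (fun l => l ^ (κ + 1)) (polyDistortion h) := by
  classical
  -- setup: the conjugate root and vanishing moments
  have hH0 : h.map (Int.castRingHom ℂ) ≠ 0 := by
    intro h0
    apply hh
    have hinj : Function.Injective (Int.castRingHom ℂ) := Int.cast_injective
    exact (Polynomial.map_eq_zero_iff hinj).mp h0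
  have hdH : (h.map (Int.castRingHom ℂ)).natDegree = h.natDegree :=
    Polynomial.natDegree_map_eq_of_injective Int.cast_injective h
  have hκd : κ ≤ h.natDegree := by
    have h1 : ((Polynomial.X - Polynomial.C c) ^ κ).natDegree
        ≤ (h.map (Int.castRingHom ℂ)).natDegree :=
      Polynomial.natDegree_le_of_dvd hdvd hH0
    rwa [Polynomial.natDegree_pow, Polynomial.natDegree_X_sub_C, mul_one, hdH] at h1
  have hd1 : 1 ≤ h.natDegree := le_trans hκ hκd
  have hconjH : (h.map (Int.castRingHom ℂ)).map (starRingEnd ℂ) = h.map (Int.castRingHom ℂ) := by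
    rw [Polynomial.map_map]
    congr 1
    exact RingHom.ext_int _ _
  have hdvd' : (Polynomial.X - Polynomial.C ((starRingEnd ℂ) c)) ^ κ ∣ h.map (Int.castRingHom ℂ) := by
    have h2 := Polynomial.map_dvd (starRingEnd ℂ) hdvd
    rwa [Polynomial.map_pow, Polynomial.map_sub, Polynomial.map_X, Polynomial.map_C, hconjH] at h2
  have hvan : ∀ u, u < κ →
      Msum (h.map (Int.castRingHom ℂ)) ((starRingEnd ℂ) c) u (h.natDegree + 1) = 0 := by
    intro u hu
    obtain ⟨R, hR⟩ := hdvd'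
    rw [hR]
    apply Msum_vanish ((starRingEnd ℂ) c) κ R u (h.natDegree + 1) hu
    rw [← hR, hdH]
    omega
  -- the constants
  set Sh : ℝ := (polyS h : ℝ) with hSh
  set CB : ℝ := 2 * (4 ^ κ * Sh * (h.natDegree : ℝ) ^ (2 * κ))
      + Sh * (2 * (h.natDegree : ℝ) ^ κ + 1) with hCBdef
  have hCB0 : 0 ≤ CB := by
    rw [hCBdef, hSh]
    positivity
  have hρ : 0 < rhoC c := rhoC_pos c
  set γ : ℝ := 2 * rhoC c / 4 ^ κ with hγdef
  have hγ0 : 0 < γ := by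
    rw [hγdef]
    positivity
  set l₁ : ℕ := ⌈2 / γ⌉₊ + 1 with hl₁def
  set Cn : ℕ := ⌈((4 : ℝ) + (h.natDegree : ℝ)) * CB⌉₊ + ⌈2 / γ⌉₊ + l₁ ^ (κ + 1)
      + polyS h + 5 with hCndef
  refine ⟨Cn, by omega, ?_⟩
  intro l
  rcases Nat.eq_zero_or_pos l with rfl | hl
  · simp
  have hBdd := bddAbove_distortion_set h hh (Cn * l)
  have hΔeq : polyDistortion h (Cn * l)
      = sSup {n | ∃ f : Polynomial ℤ, f.natDegree ≤ Cn * l ∧ polyS (h * f) ≤ Cn * l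
          ∧ polyS f = n} := rfl
  rcases le_or_gt l₁ l with hlarge | hsmall
  · -- large l : use the witness fpoly c κ (4*l)
    set f := fpoly c κ (4 * l) with hfdef
    have hn1 : 1 ≤ 4 * l := by omega
    have hdegf : f.natDegree ≤ Cn * l := by
      have h1 : f.natDegree < 4 * l := fpoly_natDegree_lt c κ (4 * l) hn1
      have h2 : 4 * l ≤ Cn * l := Nat.mul_le_mul_right l (by omega)
      omega
    have hl1R : (1 : ℝ) ≤ (l : ℝ) := by exact_mod_cast hl
    have hupper : polyS (h * f) ≤ Cn * l := by
      have hr := polyS_mul_fpoly_le h c κ (4 * l) hc hd1 hn1 hvan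
      have h2 : (((4 * l : ℕ) : ℝ) + (h.natDegree : ℝ)) * CB
          ≤ (((4 : ℝ) + (h.natDegree : ℝ)) * CB) * (l : ℝ) := by
        push_cast
        have hd0 : (0:ℝ) ≤ (h.natDegree : ℝ) := by positivity
        have hkey : (0:ℝ) ≤ CB * (h.natDegree : ℝ) * ((l:ℝ) - 1) :=
          mul_nonneg (mul_nonneg hCB0 hd0) (by linarith)
        nlinarith [hkey]
      have h3 : ((4 : ℝ) + (h.natDegree : ℝ)) * CB ≤ (Cn : ℝ) := by
        calc ((4 : ℝ) + (h.natDegree : ℝ)) * CB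
            ≤ (⌈((4 : ℝ) + (h.natDegree : ℝ)) * CB⌉₊ : ℝ) := Nat.le_ceil _
          _ ≤ (Cn : ℝ) := by
              have : ⌈((4 : ℝ) + (h.natDegree : ℝ)) * CB⌉₊ ≤ Cn := by omega
              exact_mod_cast this
      have h4 : (polyS (h * f) : ℝ) ≤ (Cn : ℝ) * (l : ℝ) := by
        calc (polyS (h * f) : ℝ)
            ≤ (((4 * l : ℕ) : ℝ) + (h.natDegree : ℝ)) * CB := by
              rw [hfdef, hCBdef, hSh]
              exact_mod_cast hr
          _ ≤ (((4 : ℝ) + (h.natDegree : ℝ)) * CB) * (l : ℝ) := h2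
          _ ≤ (Cn : ℝ) * (l : ℝ) := by
              apply mul_le_mul_of_nonneg_right h3 (by positivity)
      exact_mod_cast h4
    have hmem : polyS f ∈ {n | ∃ f' : Polynomial ℤ, f'.natDegree ≤ Cn * l
        ∧ polyS (h * f') ≤ Cn * l ∧ polyS f' = n} := ⟨f, hdegf, hupper, rfl⟩
    have hΔ : polyS f ≤ polyDistortion h (Cn * l) := by
      rw [hΔeq]
      exact le_csSup hBdd hmem
    have hlow : γ * (l : ℝ) ^ (κ + 1) - (l : ℝ) ≤ (polyS f : ℝ) := by
      have := polyS_fpoly_ge c hc κ l hl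
      rw [hγdef]
      exact this
    have hceil : (2 / γ : ℝ) ≤ (l : ℝ) := by
      calc (2 / γ : ℝ) ≤ (⌈2 / γ⌉₊ : ℝ) := Nat.le_ceil _
        _ ≤ (l : ℝ) := by
            have : ⌈2 / γ⌉₊ ≤ l := by omega
            exact_mod_cast this
    have hlk : (2 / γ : ℝ) ≤ (l : ℝ) ^ κ := by
      calc (2 / γ : ℝ) ≤ (l : ℝ) := hceil
        _ = (l : ℝ) ^ 1 := (pow_one _).symm
        _ ≤ (l : ℝ) ^ κ := pow_le_pow_right₀ hl1R hκ
    have hhalf : (γ / 2) * (l : ℝ) ^ (κ + 1) ≤ (polyS f : ℝ) := by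
      have h6 : (1 : ℝ) ≤ (γ / 2) * (l : ℝ) ^ κ := by
        calc (1 : ℝ) = (γ / 2) * (2 / γ) := by field_simp
          _ ≤ (γ / 2) * (l : ℝ) ^ κ := by
              apply mul_le_mul_of_nonneg_left hlk (by positivity)
      have h5 : (l : ℝ) ≤ (γ / 2) * (l : ℝ) ^ (κ + 1) := by
        calc (l : ℝ) = 1 * (l : ℝ) := (one_mul _).symm
          _ ≤ ((γ / 2) * (l : ℝ) ^ κ) * (l : ℝ) := by
              apply mul_le_mul_of_nonneg_right h6 (by positivity)
          _ = (γ / 2) * (l : ℝ) ^ (κ + 1) := by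
              rw [pow_succ]
              ring
      have h7 : γ * (l : ℝ) ^ (κ + 1) - (γ / 2) * (l : ℝ) ^ (κ + 1)
          = (γ / 2) * (l : ℝ) ^ (κ + 1) := by ring
      linarith
    have hfinal : (l : ℝ) ^ (κ + 1) ≤ (Cn : ℝ) * (polyS f : ℝ) := by
      have h7 : (2 / γ : ℝ) ≤ (Cn : ℝ) := by
        calc (2 / γ : ℝ) ≤ (⌈2 / γ⌉₊ : ℝ) := Nat.le_ceil _
          _ ≤ (Cn : ℝ) := by
              have : ⌈2 / γ⌉₊ ≤ Cn := by omega
              exact_mod_cast this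
      calc (l : ℝ) ^ (κ + 1) = (2 / γ) * ((γ / 2) * (l : ℝ) ^ (κ + 1)) := by
            field_simp
        _ ≤ (Cn : ℝ) * ((γ / 2) * (l : ℝ) ^ (κ + 1)) := by
            apply mul_le_mul_of_nonneg_right h7 (by positivity)
        _ ≤ (Cn : ℝ) * (polyS f : ℝ) := by
            apply mul_le_mul_of_nonneg_left hhalf (by positivity)
    have h8 : l ^ (κ + 1) ≤ Cn * polyS f := by exact_mod_cast hfinal
    calc l ^ (κ + 1) ≤ Cn * polyS f := h8
      _ ≤ Cn * polyDistortion h (Cn * l) := Nat.mul_le_mul_left _ hΔ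
  · -- small l : use the witness 1
    have h1mem : (1 : ℕ) ∈ {n | ∃ f' : Polynomial ℤ, f'.natDegree ≤ Cn * l
        ∧ polyS (h * f') ≤ Cn * l ∧ polyS f' = n} := by
      refine ⟨1, by simp, ?_, polyS_one⟩
      rw [mul_one]
      calc polyS h ≤ Cn := by omega
        _ = Cn * 1 := (mul_one _).symm
        _ ≤ Cn * l := Nat.mul_le_mul_left _ hl
    have hΔ1 : 1 ≤ polyDistortion h (Cn * l) := by
      rw [hΔeq]
      exact le_csSup hBdd h1mem
    calc l ^ (κ + 1) ≤ l₁ ^ (κ + 1) := Nat.pow_le_pow_left (by omega) _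
      _ ≤ Cn := by omega
      _ = Cn * 1 := (mul_one _).symm
      _ ≤ Cn * polyDistortion h (Cn * l) := Nat.mul_le_mul_left _ hΔ1

end Proof13

end DistortionPaper
end

section
/- Let p be a prime and k ≥ 1, and let G = (ℤ/pℤ)^k wr ℤ with b the generator of the active group ℤ. Then every finitely generated subgroup H of G containing the element b is undistorted in G. -/
open scoped Pointwise

namespace DistortionPaper

section WordLength

variable {G : Type*} [Group G] {T : Set G}

lemma wordLength_le (T : Set G) (L : List G) (hL : ∀ x ∈ L, x ∈ T ∪ T⁻¹) :
    wordLength T L.prod ≤ L.length := by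
  apply Nat.sInf_le
  refine ⟨L.get, fun i => hL _ (L.get_mem ..), ?_⟩
  rw [List.ofFn_get]

lemma exists_word (hT : Subgroup.closure T = ⊤) (g : G) :
    ∃ L : List G, (∀ x ∈ L, x ∈ T ∪ T⁻¹) ∧ L.prod = g ∧ L.length = wordLength T g := by
  have hmem : g ∈ (Subgroup.closure T).toSubmonoid := by
    rw [hT]; trivial
  rw [Subgroup.closure_toSubmonoid] at hmem
  obtain ⟨L, hL, hprod⟩ := Submonoid.exists_list_of_mem_closure hmem
  have hne : {n | ∃ f : Fin n → G, (∀ i, f i ∈ T ∪ T⁻¹) ∧ (List.ofFn f).prod = g}.Nonempty := by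
    refine ⟨L.length, L.get, fun i => hL _ (L.get_mem ..), ?_⟩
    rw [List.ofFn_get, hprod]
  obtain ⟨f, hf, hfp⟩ := Nat.sInf_mem hne
  refine ⟨List.ofFn f, ?_, hfp, by simp [wordLength]⟩
  intro x hx
  obtain ⟨i, hi⟩ := List.mem_ofFn.mp hx
  exact hi ▸ hf i

lemma wordLength_one (T : Set G) : wordLength T (1 : G) = 0 := by
  have := wordLength_le T [] (by simp)
  simpa using this

lemma wordLength_mul_le (hT : Subgroup.closure T = ⊤) (g h : G) :
    wordLength T (g * h) ≤ wordLength T g + wordLength T h := by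
  obtain ⟨L, hL, hLp, hLl⟩ := exists_word hT g
  obtain ⟨L', hL', hLp', hLl'⟩ := exists_word hT h
  have := wordLength_le T (L ++ L') (by
    intro x hx
    rcases List.mem_append.mp hx with h | h
    · exact hL x h
    · exact hL' x h)
  simpa [hLp, hLp', hLl, hLl'] using this

lemma wordLength_inv_le (hT : Subgroup.closure T = ⊤) (g : G) :
    wordLength T g⁻¹ ≤ wordLength T g := by
  obtain ⟨L, hL, hLp, hLl⟩ := exists_word hT g
  have := wordLength_le T ((L.map fun x => x⁻¹).reverse) (by
    intro x hx
    simp only [List.mem_reverse, List.mem_map] at hx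
    obtain ⟨y, hy, rfl⟩ := hx
    rcases hL y hy with h | h
    · exact Or.inr (by simpa using h)
    · exact Or.inl (by simpa using h))
  rw [← List.prod_inv_reverse, hLp] at this
  simpa [hLl] using this

lemma wordLength_inv (hT : Subgroup.closure T = ⊤) (g : G) :
    wordLength T g⁻¹ = wordLength T g := by
  refine le_antisymm (wordLength_inv_le hT g) ?_
  simpa using wordLength_inv_le hT g⁻¹

lemma wordLength_pow_le (hT : Subgroup.closure T = ⊤) (g : G) (n : ℕ) :
    wordLength T (g ^ n) ≤ n * wordLength T g := by
  induction n with
  | zero => simp [wordLength_one]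
  | succ n ih =>
    calc wordLength T (g ^ (n + 1)) = wordLength T (g ^ n * g) := by rw [pow_succ]
    _ ≤ wordLength T (g ^ n) + wordLength T g := wordLength_mul_le hT _ _
    _ ≤ n * wordLength T g + wordLength T g := by omega
    _ = (n + 1) * wordLength T g := by ring

lemma wordLength_zpow_le (hT : Subgroup.closure T = ⊤) (g : G) (t : ℤ) :
    wordLength T (g ^ t) ≤ t.natAbs * wordLength T g := by
  rcases Int.natAbs_eq t with h | h
  · rw [h, zpow_natCast]; exact wordLength_pow_le hT g _
  · have h1 := wordLength_pow_le hT g t.natAbs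
    have h2 : g ^ t = (g ^ (t.natAbs : ℕ))⁻¹ := by
      conv_lhs => rw [h]
      rw [← zpow_natCast g t.natAbs, ← zpow_neg]
    rw [h2]
    exact le_trans (wordLength_inv_le hT _) h1

lemma exists_bound {α : Type*} (S : Set α) (hS : S.Finite) (F : α → ℕ) :
    ∃ K : ℕ, ∀ x ∈ S, F x ≤ K := by
  obtain ⟨K, hK⟩ := (hS.image F).bddAbove
  exact ⟨K, fun x hx => hK ⟨x, hx, rfl⟩⟩

lemma abs_hom_prod_le {φ : G →* Multiplicative ℤ} {c : ℕ} (L : List G)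
    (h : ∀ x ∈ L, (Multiplicative.toAdd (φ x)).natAbs ≤ c) :
    (Multiplicative.toAdd (φ L.prod)).natAbs ≤ c * L.length := by
  induction L with
  | nil => simp
  | cons x L ih =>
    have hx := h x (by simp)
    have hL := ih fun y hy => h y (by simp [hy])
    have : Multiplicative.toAdd (φ (x :: L).prod)
        = Multiplicative.toAdd (φ x) + Multiplicative.toAdd (φ L.prod) := by
      simp [List.prod_cons]
    rw [this]
    calc (Multiplicative.toAdd (φ x) + Multiplicative.toAdd (φ L.prod)).natAbs
        ≤ (Multiplicative.toAdd (φ x)).natAbs + (Multiplicative.toAdd (φ L.prod)).natAbs :=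
          Int.natAbs_add_le _ _
      _ ≤ c + c * L.length := by omega
      _ = c * (x :: L).length := by simp [List.length_cons]; ring

end WordLength

section Wreath

variable {A : Type*} [CommGroup A]

/-- Shift by `j`: moves support up by `j`. -/
def sh (j : ℤ) (f : WreathBase A Mℤ) : WreathBase A Mℤ :=
  wreathAction A Mℤ (Multiplicative.ofAdd (-j)) f

/-- Integer support of a base element. -/
def spt (f : WreathBase A Mℤ) : Set ℤ :=
  {x | (f : Mℤ → A) (Multiplicative.ofAdd x) ≠ 1}

lemma coe_apply_eq (f : WreathBase A Mℤ) (y : Mℤ) :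
    (f : Mℤ → A) y = (f : Mℤ → A) (Multiplicative.ofAdd (Multiplicative.toAdd y)) := rfl

lemma wreathAction_apply (u : Mℤ) (f : WreathBase A Mℤ) (y : Mℤ) :
    ((wreathAction A Mℤ u f : WreathBase A Mℤ) : Mℤ → A) y = (f : Mℤ → A) (y * u) := rfl

lemma sh_apply (j : ℤ) (f : WreathBase A Mℤ) (x : ℤ) :
    ((sh j f : WreathBase A Mℤ) : Mℤ → A) (Multiplicative.ofAdd x)
      = (f : Mℤ → A) (Multiplicative.ofAdd (x - j)) := by
  show (f : Mℤ → A) (Multiplicative.ofAdd x * Multiplicative.ofAdd (-j)) = _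
  rw [← ofAdd_add]
  ring_nf

lemma sh_sh (a b : ℤ) (f : WreathBase A Mℤ) : sh a (sh b f) = sh (a + b) f := by
  show wreathAction A Mℤ _ (wreathAction A Mℤ _ f) = wreathAction A Mℤ _ f
  rw [← MulAut.mul_apply, ← map_mul, ← ofAdd_add]
  ring_nf

lemma sh_zero (f : WreathBase A Mℤ) : sh 0 f = f := by
  show wreathAction A Mℤ (Multiplicative.ofAdd (-0 : ℤ)) f = f
  norm_num

lemma sh_mul (j : ℤ) (f g : WreathBase A Mℤ) : sh j (f * g) = sh j f * sh j g :=
  map_mul (wreathAction A Mℤ (Multiplicative.ofAdd (-j))) f g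

lemma sh_one (j : ℤ) : sh j (1 : WreathBase A Mℤ) = 1 :=
  map_one (wreathAction A Mℤ (Multiplicative.ofAdd (-j)))

lemma mem_spt_sh (j : ℤ) (f : WreathBase A Mℤ) (x : ℤ) :
    x ∈ spt (sh j f) ↔ x - j ∈ spt f := by
  unfold spt
  simp [sh_apply]

lemma spt_one : spt (1 : WreathBase A Mℤ) = ∅ := by
  ext x; simp [spt]

lemma spt_mul (f g : WreathBase A Mℤ) : spt (f * g) ⊆ spt f ∪ spt g := by
  intro x hx
  by_contra hc
  simp only [Set.mem_union, not_or, spt, Set.mem_setOf_eq, not_not] at hc hx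
  apply hx
  show (f : Mℤ → A) _ * (g : Mℤ → A) _ = 1
  rw [hc.1, hc.2, mul_one]

lemma spt_inv (f : WreathBase A Mℤ) : spt f⁻¹ = spt f := by
  ext x
  simp only [spt, Set.mem_setOf_eq]
  have h : ((f⁻¹ : WreathBase A Mℤ) : Mℤ → A) (Multiplicative.ofAdd x)
      = ((f : Mℤ → A) (Multiplicative.ofAdd x))⁻¹ := rfl
  rw [h, ne_eq, inv_eq_one]

lemma eq_one_of_spt_empty (f : WreathBase A Mℤ) (h : spt f = ∅) : f = 1 := by
  apply Subtype.ext
  funext y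
  have : Multiplicative.toAdd y ∉ spt f := by rw [h]; exact Set.notMem_empty _
  simp only [spt, Set.mem_setOf_eq, not_not] at this
  rw [coe_apply_eq]
  exact this

lemma spt_finite (f : WreathBase A Mℤ) : (spt f).Finite := by
  have : spt f = Multiplicative.ofAdd ⁻¹' (Function.mulSupport (f : Mℤ → A)) := rfl
  rw [this]
  exact f.2.preimage (Set.injOn_of_injective (fun a b h => by exact_mod_cast h))

end Wreath

section Mod

variable {A : Type*} [CommGroup A] {H : Subgroup (WreathProduct A Mℤ)}

/-- The standard active generator. -/
def bGen (A : Type*) [Group A] : WreathProduct A Mℤ := ofActive A Mℤ (Multiplicative.ofAdd 1)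

lemma ofAdd_one_zpow (t : ℤ) : (Multiplicative.ofAdd (1 : ℤ)) ^ t = Multiplicative.ofAdd t := by
  apply Multiplicative.toAdd.injective
  simp

lemma inr_ofAdd_eq_bGen_zpow (t : ℤ) :
    (SemidirectProduct.inr (Multiplicative.ofAdd t) : WreathProduct A Mℤ) = bGen A ^ t := by
  rw [bGen, ofActive, ← map_zpow, ofAdd_one_zpow]

lemma inr_mem (hb : bGen A ∈ H) (t : ℤ) :
    (SemidirectProduct.inr (Multiplicative.ofAdd t) : WreathProduct A Mℤ) ∈ H := by
  rw [inr_ofAdd_eq_bGen_zpow]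
  exact zpow_mem hb t

/-- The set of base elements lying in `H`. -/
def Mset (H : Subgroup (WreathProduct A Mℤ)) : Set (WreathBase A Mℤ) :=
  {f | SemidirectProduct.inl f ∈ H}

lemma MsetOne : (1 : WreathBase A Mℤ) ∈ Mset H := by
  show SemidirectProduct.inl 1 ∈ H
  rw [map_one]; exact Subgroup.one_mem H

lemma MsetMul {f g : WreathBase A Mℤ} (hf : f ∈ Mset H) (hg : g ∈ Mset H) :
    f * g ∈ Mset H := by
  show SemidirectProduct.inl (f * g) ∈ H
  rw [map_mul]; exact Subgroup.mul_mem H hf hg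

lemma MsetInv {f : WreathBase A Mℤ} (hf : f ∈ Mset H) : f⁻¹ ∈ Mset H := by
  show SemidirectProduct.inl f⁻¹ ∈ H
  rw [map_inv]; exact Subgroup.inv_mem H hf

lemma MsetSh (hb : bGen A ∈ H) {f : WreathBase A Mℤ} (hf : f ∈ Mset H) (j : ℤ) :
    sh j f ∈ Mset H := by
  show SemidirectProduct.inl (wreathAction A Mℤ (Multiplicative.ofAdd (-j)) f) ∈ H
  rw [SemidirectProduct.inl_aut]
  refine Subgroup.mul_mem H (Subgroup.mul_mem H (inr_mem hb _) hf) ?_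
  rw [show (Multiplicative.ofAdd (-j))⁻¹ = Multiplicative.ofAdd j by simp]
  exact inr_mem hb j

/-- Top coefficients of elements of `Mset H` supported in `[0, d]`. -/
def Lset (H : Subgroup (WreathProduct A Mℤ)) (d : ℕ) : Set A :=
  {a | ∃ f, f ∈ Mset H ∧ spt f ⊆ Set.Icc 0 (d : ℤ) ∧
    (f : Mℤ → A) (Multiplicative.ofAdd (d : ℤ)) = a}

lemma Lset_mono (hb : bGen A ∈ H) (d : ℕ) : Lset H d ⊆ Lset H (d + 1) := by
  rintro a ⟨f, hf, hsupp, hval⟩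
  refine ⟨sh 1 f, MsetSh hb hf 1, ?_, ?_⟩
  · intro x hx
    have hx' := (mem_spt_sh 1 f x).mp hx
    have := hsupp hx'
    simp only [Set.mem_Icc] at this ⊢
    push_cast
    omega
  · rw [show ((d + 1 : ℕ) : ℤ) = (d : ℤ) + 1 by push_cast; ring, sh_apply]
    simpa using hval

lemma Lset_mono' (hb : bGen A ∈ H) {d d' : ℕ} (h : d ≤ d') : Lset H d ⊆ Lset H d' := by
  induction d' with
  | zero => simpa [Nat.le_zero.mp h] using subset_rfl
  | succ n ih =>
    rcases Nat.lt_or_ge d (n+1) with h' | h'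
    · exact (ih (by omega)).trans (Lset_mono hb n)
    · have : d = n + 1 := by omega
      subst this; exact subset_rfl

lemma exists_stab [Finite A] (hb : bGen A ∈ H) :
    ∃ d₀ : ℕ, ∀ d, d₀ ≤ d → Lset H d = Lset H d₀ := by
  set u : ℕ → ℕ := fun d => (Lset H d).ncard with hu
  have hbdd : BddAbove (Set.range u) := by
    refine ⟨Nat.card A, ?_⟩
    rintro n ⟨d, rfl⟩
    have := Set.ncard_le_ncard (Set.subset_univ (Lset H d)) Set.finite_univ
    simpa [Set.ncard_univ] using this
  obtain ⟨d₀, hd₀⟩ := Nat.sSup_mem (Set.range_nonempty u) hbdd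
  refine ⟨d₀, fun d hd => ?_⟩
  have hsub := Lset_mono' hb hd
  have hcard : u d ≤ u d₀ := by
    rw [hd₀]
    exact le_csSup hbdd (Set.mem_range_self d)
  exact (Set.eq_of_subset_of_ncard_le hsub hcard (Set.toFinite _)).symm

/-- The key representation lemma: every element of `Mset H` supported in `[0,d]` is a
product of shifts (by `0..d`) of elements of `Mset H` supported in `[0,d₀]`. -/
lemma rep (hb : bGen A ∈ H) (d₀ : ℕ) (hstab : ∀ d, d₀ ≤ d → Lset H d = Lset H d₀) :
    ∀ d : ℕ, ∀ f ∈ Mset H, spt f ⊆ Set.Icc 0 (d : ℤ) →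
    ∃ g : ℕ → WreathBase A Mℤ,
      (∀ j, g j ∈ Mset H ∧ spt (g j) ⊆ Set.Icc 0 (d₀ : ℤ)) ∧
      (∀ j, d < j → g j = 1) ∧
      f = ∏ j ∈ Finset.range (d + 1), sh (j : ℤ) (g j) := by
  intro d
  induction d with
  | zero =>
    intro f hf hsupp
    refine ⟨fun j => if j = 0 then f else 1, ?_, ?_, ?_⟩
    · intro j
      by_cases hj : j = 0
      · subst hj
        simp only [if_pos rfl]
        exact ⟨hf, hsupp.trans (by intro x hx; simp only [Set.mem_Icc] at *; omega)⟩
      · simp only [if_neg hj, spt_one]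
        exact ⟨MsetOne, by simp⟩
    · intro j hj
      simp [show j ≠ 0 by omega]
    · simp [sh_zero]
  | succ d ih =>
    intro f hf hsupp
    by_cases hcase : d + 1 ≤ d₀
    · refine ⟨fun j => if j = 0 then f else 1, ?_, ?_, ?_⟩
      · intro j
        by_cases hj : j = 0
        · subst hj
          simp only [if_pos rfl]
          refine ⟨hf, hsupp.trans ?_⟩
          intro x hx; simp only [Set.mem_Icc] at *; omega
        · simp only [if_neg hj, spt_one]
          exact ⟨MsetOne, by simp⟩
      · intro j hj
        simp [show j ≠ 0 by omega]
      · rw [Finset.prod_eq_single_of_mem 0 (by simp) ?h]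
        · simp [sh_zero]
        case h =>
          intro j _ hj
          simp [if_neg hj, sh_one]
    · -- d₀ ≤ d
      have hd₀d : d₀ ≤ d := by omega
      set v : A := (f : Mℤ → A) (Multiplicative.ofAdd ((d + 1 : ℕ) : ℤ)) with hv
      have hvL : v ∈ Lset H (d + 1) := ⟨f, hf, hsupp, rfl⟩
      rw [hstab (d + 1) (by omega)] at hvL
      obtain ⟨e, he, hesupp, hev⟩ := hvL
      set j₀ : ℕ := d + 1 - d₀ with hj₀
      have hj₀cast : (j₀ : ℤ) = (d : ℤ) + 1 - (d₀ : ℤ) := by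
        rw [hj₀]; push_cast [hd₀d]; omega
      set f' : WreathBase A Mℤ := f * (sh (j₀ : ℤ) e)⁻¹ with hf'def
      have hf' : f' ∈ Mset H := MsetMul hf (MsetInv (MsetSh hb he _))
      have hval1 : ((sh (j₀ : ℤ) e : WreathBase A Mℤ) : Mℤ → A)
          (Multiplicative.ofAdd ((d + 1 : ℕ) : ℤ)) = v := by
        rw [sh_apply]
        rw [show ((d + 1 : ℕ) : ℤ) - (j₀ : ℤ) = (d₀ : ℤ) by rw [hj₀cast]; push_cast; ring]
        exact hev
      have hsupp' : spt f' ⊆ Set.Icc 0 (d : ℤ) := by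
        intro x hx
        have hx1 : x ∈ spt f ∪ spt ((sh (j₀ : ℤ) e)⁻¹) := spt_mul _ _ hx
        rw [spt_inv] at hx1
        have hxne : x ≠ (d : ℤ) + 1 := by
          intro hxe
          have : ((f' : WreathBase A Mℤ) : Mℤ → A) (Multiplicative.ofAdd x) ≠ 1 := hx
          apply this
          have hcoe : ((f' : WreathBase A Mℤ) : Mℤ → A) (Multiplicative.ofAdd x)
              = (f : Mℤ → A) (Multiplicative.ofAdd x) *
                (((sh (j₀ : ℤ) e : WreathBase A Mℤ) : Mℤ → A) (Multiplicative.ofAdd x))⁻¹ := rfl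
          rw [hcoe, hxe]
          rw [show (d : ℤ) + 1 = ((d + 1 : ℕ) : ℤ) by push_cast; ring]
          rw [hval1, ← hv, mul_inv_cancel]
        rcases hx1 with h1 | h1
        · have := hsupp h1
          simp only [Set.mem_Icc] at this ⊢
          push_cast at this
          omega
        · have h2 := (mem_spt_sh _ _ _).mp h1
          have := hesupp h2
          simp only [Set.mem_Icc] at this ⊢
          omega
      obtain ⟨g', hg'mem, hg'one, hg'prod⟩ := ih f' hf' hsupp'
      refine ⟨Function.update g' j₀ (g' j₀ * e), ?_, ?_, ?_⟩
      · intro j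
        by_cases hj : j = j₀
        · subst hj
          rw [Function.update_self]
          refine ⟨MsetMul (hg'mem j₀).1 he, ?_⟩
          intro x hx
          rcases spt_mul _ _ hx with h1 | h1
          · exact (hg'mem j₀).2 h1
          · exact hesupp h1
        · rw [Function.update_of_ne hj]
          exact hg'mem j
      · intro j hj
        have hjne : j ≠ j₀ := by omega
        rw [Function.update_of_ne hjne]
        exact hg'one j (by omega)
      · have hgsplit : ∀ j, Function.update g' j₀ (g' j₀ * e) j
            = g' j * (if j = j₀ then e else 1) := by
          intro j
          by_cases hj : j = j₀
          · subst hj; rw [Function.update_self, if_pos rfl]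
          · rw [Function.update_of_ne hj, if_neg hj, mul_one]
        calc f = f' * sh (j₀ : ℤ) e := by rw [hf'def, inv_mul_cancel_right]
          _ = (∏ j ∈ Finset.range (d + 1 + 1), sh (j : ℤ) (g' j)) * sh (j₀ : ℤ) e := by
              rw [Finset.prod_range_succ, hg'one (d+1) (by omega), sh_one, mul_one, ← hg'prod]
          _ = ∏ j ∈ Finset.range (d + 1 + 1), sh (j : ℤ) (Function.update g' j₀ (g' j₀ * e) j) := by
              have h2 : ∀ j ∈ Finset.range (d + 1 + 1),
                  sh (j : ℤ) (Function.update g' j₀ (g' j₀ * e) j)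
                  = sh (j : ℤ) (g' j) * (if j = j₀ then sh (j₀ : ℤ) e else 1) := by
                intro j _
                rw [hgsplit, sh_mul]
                congr 1
                by_cases hj : j = j₀
                · subst hj; rw [if_pos rfl, if_pos rfl]
                · rw [if_neg hj, if_neg hj, sh_one]
              rw [Finset.prod_congr rfl h2, Finset.prod_mul_distrib,
                Finset.prod_ite_eq' (Finset.range (d + 1 + 1)) j₀ (fun _ => sh (j₀ : ℤ) e),
                if_pos (by simp [hj₀])]
      done

lemma sh_prod (t : ℤ) {ι : Type*} (sfin : Finset ι) (F : ι → WreathBase A Mℤ) :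
    sh t (∏ j ∈ sfin, F j) = ∏ j ∈ sfin, sh t (F j) :=
  map_prod (wreathAction A Mℤ (Multiplicative.ofAdd (-t))) F sfin

/-- The sweep identity: a product of deposits at positions `j - s` for `j = 0, …, N-1`
equals a single left-to-right sweep. -/
lemma sweep (s : ℤ) (g : ℕ → WreathBase A Mℤ) (N : ℕ) :
    (SemidirectProduct.inl (∏ j ∈ Finset.range N, sh ((j : ℤ) - s) (g j))
        : WreathProduct A Mℤ)
      = bGen A ^ s * ((List.range N).map
          (fun j => (SemidirectProduct.inl (g j) : WreathProduct A Mℤ) * (bGen A)⁻¹)).prod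
        * bGen A ^ ((N : ℤ) - s) := by
  induction N with
  | zero =>
    simp only [Finset.range_zero, Finset.prod_empty, map_one, Nat.cast_zero, zero_sub,
      List.range_zero, List.map_nil, List.prod_nil, mul_one]
    rw [zpow_neg, mul_inv_cancel]
  | succ N ih =>
    rw [Finset.prod_range_succ, map_mul, ih, List.range_succ, List.map_append,
      List.prod_append, List.map_cons, List.map_nil, List.prod_cons, List.prod_nil]
    have hdep : (SemidirectProduct.inl (sh ((N : ℤ) - s) (g N)) : WreathProduct A Mℤ)
        = bGen A ^ (s - (N : ℤ)) * SemidirectProduct.inl (g N) * (bGen A ^ (s - (N : ℤ)))⁻¹ := by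
      have h1 : sh ((N : ℤ) - s) (g N)
          = wreathAction A Mℤ (Multiplicative.ofAdd (s - (N : ℤ))) (g N) := by
        rw [sh]; congr 2; ring
      rw [h1, SemidirectProduct.inl_aut]
      have h2 : (SemidirectProduct.inr ((Multiplicative.ofAdd (s - (N : ℤ)))⁻¹)
          : WreathProduct A Mℤ) = (bGen A ^ (s - (N : ℤ)))⁻¹ := by
        rw [show (Multiplicative.ofAdd (s - (N : ℤ)))⁻¹
            = Multiplicative.ofAdd (-(s - (N : ℤ))) by simp,
          inr_ofAdd_eq_bGen_zpow, zpow_neg]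
      rw [h2, inr_ofAdd_eq_bGen_zpow]
    rw [hdep]
    have hcast : ((N + 1 : ℕ) : ℤ) - s = ((N : ℤ) - s) + 1 := by push_cast; ring
    rw [hcast]
    rw [zpow_add, zpow_one, zpow_sub, zpow_sub]
    group

/-- Base elements supported in `[0, d₀]` form a finite set. -/
lemma window_finite [Finite A] (d₀ : ℕ) :
    {f : WreathBase A Mℤ | spt f ⊆ Set.Icc 0 (d₀ : ℤ)}.Finite := by
  set F : WreathBase A Mℤ → (Fin (d₀ + 1) → A) :=
    fun f i => (f : Mℤ → A) (Multiplicative.ofAdd ((i : ℕ) : ℤ))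
  apply Set.Finite.of_finite_image (f := F) (Set.toFinite _)
  intro f hf f' hf' hFF
  apply Subtype.ext
  funext y
  rw [coe_apply_eq f y, coe_apply_eq f' y]
  set x : ℤ := Multiplicative.toAdd y with hx
  by_cases hxmem : x ∈ Set.Icc 0 (d₀ : ℤ)
  · simp only [Set.mem_Icc] at hxmem
    have hlt : x.toNat < d₀ + 1 := by omega
    have := congrFun hFF ⟨x.toNat, hlt⟩
    simpa only [F, Int.toNat_of_nonneg hxmem.1] using this
  · have h1 : x ∉ spt f := fun hc => hxmem (hf hc)
    have h2 : x ∉ spt f' := fun hc => hxmem (hf' hc)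
    simp only [spt, Set.mem_setOf_eq, not_not] at h1 h2
    rw [h1, h2]

/-- Geometric bound: a product of `n` generators has support within `[-cn, cn]` and
active part of absolute value at most `cn`. -/
lemma geo (c : ℕ) (T : Set (WreathProduct A Mℤ))
    (hc : ∀ x ∈ T ∪ T⁻¹, spt x.left ⊆ Set.Icc (-(c : ℤ)) c ∧
      (Multiplicative.toAdd x.right).natAbs ≤ c) :
    ∀ L : List (WreathProduct A Mℤ), (∀ x ∈ L, x ∈ T ∪ T⁻¹) →
      spt L.prod.left ⊆ Set.Icc (-((c * L.length : ℕ) : ℤ)) ((c * L.length : ℕ) : ℤ) ∧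
      (Multiplicative.toAdd L.prod.right).natAbs ≤ c * L.length := by
  intro L
  induction L with
  | nil =>
    intro _
    constructor
    · intro x hx
      have h0 : (List.prod ([] : List (WreathProduct A Mℤ))).left = 1 := rfl
      rw [h0, spt_one] at hx
      exact absurd hx (Set.notMem_empty x)
    · simp
  | cons a L ih =>
    intro hmem
    have ha := hc a (hmem a (by simp))
    obtain ⟨ihs, ihr⟩ := ih (fun x hx => hmem x (by simp [hx]))
    rw [List.prod_cons]
    set q : ℕ := c * L.length with hq
    have hq' : c * (a :: L).length = q + c := by
      rw [hq, List.length_cons]; ring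
    constructor
    · intro z hz
      have hz1 : z ∈ spt a.left ∪ spt ((wreathAction A Mℤ a.right) L.prod.left) := by
        exact spt_mul _ _ (by exact hz)
      rw [hq']
      simp only [Set.mem_Icc]
      rcases hz1 with h1 | h1
      · have h2 := ha.1 h1
        simp only [Set.mem_Icc] at h2
        push_cast
        omega
      · have heq : (wreathAction A Mℤ a.right) L.prod.left
            = sh (-(Multiplicative.toAdd a.right)) L.prod.left := by
          rw [sh]; congr 2; simp
        rw [heq] at h1
        have h2 := (mem_spt_sh _ _ _).mp h1
        have h3 := ihs h2
        simp only [Set.mem_Icc] at h3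
        have h4 := ha.2
        push_cast
        push_cast at h3
        omega
    · have h0 : Multiplicative.toAdd (a * L.prod).right
          = Multiplicative.toAdd a.right + Multiplicative.toAdd L.prod.right := by
        simp
      rw [h0, hq']
      have h5 := Int.natAbs_add_le (Multiplicative.toAdd a.right)
        (Multiplicative.toAdd L.prod.right)
      have h6 := ha.2
      omega

lemma exists_geo_bound (T : Set (WreathProduct A Mℤ)) (hT : T.Finite) :
    ∃ c : ℕ, ∀ x ∈ T ∪ T⁻¹, spt x.left ⊆ Set.Icc (-(c : ℤ)) c ∧
      (Multiplicative.toAdd x.right).natAbs ≤ c := by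
  have hU : (T ∪ T⁻¹).Finite := hT.union hT.inv
  have hS : (⋃ x ∈ T ∪ T⁻¹, spt x.left).Finite :=
    hU.biUnion fun x _ => spt_finite _
  obtain ⟨c₁, hc₁⟩ := exists_bound _ hS Int.natAbs
  obtain ⟨c₂, hc₂⟩ := exists_bound (T ∪ T⁻¹) hU
    (fun x => (Multiplicative.toAdd x.right).natAbs)
  refine ⟨c₁ + c₂, fun x hx => ⟨?_, ?_⟩⟩
  · intro z hz
    have := hc₁ z (Set.mem_biUnion hx hz)
    simp only [Set.mem_Icc]
    push_cast
    omega
  · have := hc₂ x hx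
    omega

lemma wordLength_listprod_le {G : Type*} [Group G] {T : Set G}
    (hT : Subgroup.closure T = ⊤) (D : ℕ) (L : List G)
    (h : ∀ x ∈ L, wordLength T x ≤ D) : wordLength T L.prod ≤ D * L.length := by
  induction L with
  | nil => simp [wordLength_one]
  | cons a L ih =>
    rw [List.prod_cons]
    calc wordLength T (a * L.prod) ≤ wordLength T a + wordLength T L.prod :=
          wordLength_mul_le hT _ _
      _ ≤ D + D * L.length := add_le_add (h a (by simp)) (ih fun x hx => h x (by simp [hx]))
      _ = D * (a :: L).length := by rw [List.length_cons]; ring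

variable [Finite A]

/-- The main upper estimate: elements of `H` whose support and active part are bounded by `m`
have `S`-word length linear in `m`. -/
lemma main_est (hb : bGen A ∈ H) (S : Set ↥H) (hSfin : S.Finite)
    (hSgen : Subgroup.closure S = ⊤) :
    ∃ C : ℕ, 0 < C ∧ ∀ (h : ↥H) (m : ℕ),
      spt (h : WreathProduct A Mℤ).left ⊆ Set.Icc (-(m : ℤ)) (m : ℤ) →
      (Multiplicative.toAdd (h : WreathProduct A Mℤ).right).natAbs ≤ m →
      wordLength S h ≤ C * (m + 1) := by
  classical
  obtain ⟨d₀, hstab⟩ := exists_stab hb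
  set E : Set (WreathBase A Mℤ) := {e | e ∈ Mset H ∧ spt e ⊆ Set.Icc 0 (d₀ : ℤ)} with hE
  have hEfin : E.Finite := (window_finite d₀).subset fun e he => he.2
  set bH : ↥H := ⟨bGen A, hb⟩ with hbH
  set EH : Set ↥H := (fun x : ↥H => (x : WreathProduct A Mℤ)) ⁻¹'
    (SemidirectProduct.inl '' E) with hEHdef
  have hEHfin : EH.Finite := ((hEfin.image _).preimage
    (Set.injOn_of_injective Subtype.val_injective))
  obtain ⟨K₀, hK₀⟩ := exists_bound (EH ∪ {bH}) (hEHfin.union (Set.finite_singleton bH))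
    (wordLength S)
  set K := K₀ + 1 with hKdef
  have hKb : wordLength S bH ≤ K := le_trans (hK₀ bH (Or.inr rfl)) (by omega)
  have hKE : ∀ x ∈ EH, wordLength S x ≤ K := fun x hx => le_trans (hK₀ x (Or.inl hx)) (by omega)
  refine ⟨7 * K + 3, by omega, ?_⟩
  intro h m hsupp hright
  set tn : ℤ := Multiplicative.toAdd (h : WreathProduct A Mℤ).right with htn
  set f : WreathBase A Mℤ := (h : WreathProduct A Mℤ).left with hfdef
  set hf : ↥H := h * bH ^ (-tn) with hhf
  have h2 : (bGen A : WreathProduct A Mℤ) ^ (-tn)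
      = SemidirectProduct.inr ((h : WreathProduct A Mℤ).right)⁻¹ := by
    rw [← inr_ofAdd_eq_bGen_zpow]
    rfl
  have hcoe_hf : (hf : WreathProduct A Mℤ) = SemidirectProduct.inl f := by
    have hcoe : (hf : WreathProduct A Mℤ)
        = (h : WreathProduct A Mℤ) * (bGen A) ^ (-tn) := by rw [hhf]; simp; rfl
    apply SemidirectProduct.ext
    · rw [hcoe, ← inr_ofAdd_eq_bGen_zpow, SemidirectProduct.mul_left,
        SemidirectProduct.left_inr, map_one, mul_one, SemidirectProduct.left_inl]
    · rw [hcoe, ← inr_ofAdd_eq_bGen_zpow, SemidirectProduct.mul_right,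
        SemidirectProduct.right_inr, SemidirectProduct.right_inl]
      apply Multiplicative.toAdd.injective
      simp [htn]
  have hfM : f ∈ Mset H := by
    show SemidirectProduct.inl f ∈ H
    rw [← hcoe_hf]
    exact hf.2
  set f' : WreathBase A Mℤ := sh (m : ℤ) f with hf'def
  have hf'M : f' ∈ Mset H := MsetSh hb hfM _
  have hsupp' : spt f' ⊆ Set.Icc 0 ((2 * m : ℕ) : ℤ) := by
    intro x hx
    have h3 := hsupp ((mem_spt_sh _ _ _).mp hx)
    simp only [Set.mem_Icc] at h3 ⊢
    push_cast
    omega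
  obtain ⟨g, hgE, hgone, hgprod⟩ := rep hb d₀ hstab (2 * m) f' hf'M hsupp'
  have hfprod : f = ∏ j ∈ Finset.range (2 * m + 1), sh ((j : ℤ) - (m : ℤ)) (g j) := by
    have h4 : f = sh (-(m : ℤ)) f' := by
      rw [hf'def, sh_sh]
      norm_num [sh_zero]
    rw [h4, hgprod, sh_prod]
    refine Finset.prod_congr rfl fun j _ => ?_
    rw [sh_sh]
    congr 1
    ring
  have hsweep := sweep (A := A) (m : ℤ) g (2 * m + 1)
  rw [← hfprod] at hsweep
  have hexp : ((2 * m + 1 : ℕ) : ℤ) - (m : ℤ) = (m : ℤ) + 1 := by push_cast; ring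
  rw [hexp] at hsweep
  -- lift to H
  set eH : ℕ → ↥H := fun j => ⟨SemidirectProduct.inl (g j), (hgE j).1⟩ with heH
  set LH : List ↥H := (List.range (2 * m + 1)).map (fun j => eH j * bH⁻¹) with hLH
  have hLHlen : LH.length = 2 * m + 1 := by simp [hLH]
  have hHdecomp : hf = bH ^ (m : ℤ) * LH.prod * bH ^ ((m : ℤ) + 1) := by
    apply Subtype.ext
    rw [hcoe_hf, hsweep]
    have hcoe1 : ((bH ^ (m : ℤ) * LH.prod * bH ^ ((m : ℤ) + 1) : ↥H) : WreathProduct A Mℤ)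
        = (bGen A) ^ (m : ℤ) * (H.subtype LH.prod) * (bGen A) ^ ((m : ℤ) + 1) := by
      simp [Subgroup.coe_subtype]; rfl
    rw [hcoe1, map_list_prod]
    congr 2
    rw [hLH, List.map_map]
    rfl
  have hh : h = hf * bH ^ tn := by
    rw [hhf, mul_assoc, ← zpow_add, neg_add_cancel, zpow_zero, mul_one]
  -- word length estimates
  have e1 : wordLength S (bH ^ (m : ℤ)) ≤ m * K := by
    calc wordLength S (bH ^ (m : ℤ)) ≤ (m : ℤ).natAbs * wordLength S bH :=
          wordLength_zpow_le hSgen _ _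
      _ ≤ m * K := by
          have : (m : ℤ).natAbs = m := Int.natAbs_natCast m
          rw [this]
          exact Nat.mul_le_mul_left m hKb
  have e2 : wordLength S (bH ^ ((m : ℤ) + 1)) ≤ (m + 1) * K := by
    calc wordLength S (bH ^ ((m : ℤ) + 1)) ≤ ((m : ℤ) + 1).natAbs * wordLength S bH :=
          wordLength_zpow_le hSgen _ _
      _ ≤ (m + 1) * K := by
          have : ((m : ℤ) + 1).natAbs = m + 1 := by omega
          rw [this]
          exact Nat.mul_le_mul_left _ hKb
  have e3 : wordLength S (bH ^ tn) ≤ m * K := by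
    calc wordLength S (bH ^ tn) ≤ tn.natAbs * wordLength S bH := wordLength_zpow_le hSgen _ _
      _ ≤ m * K := Nat.mul_le_mul hright hKb
  have e4 : wordLength S LH.prod ≤ (2 * K) * (2 * m + 1) := by
    rw [← hLHlen]
    apply wordLength_listprod_le hSgen
    intro x hx
    rw [hLH] at hx
    simp only [List.mem_map, List.mem_range] at hx
    obtain ⟨j, _, rfl⟩ := hx
    calc wordLength S (eH j * bH⁻¹) ≤ wordLength S (eH j) + wordLength S bH⁻¹ :=
          wordLength_mul_le hSgen _ _
      _ ≤ K + K := by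
          refine add_le_add (hKE _ ?_) ?_
          · show ((eH j : ↥H) : WreathProduct A Mℤ) ∈ SemidirectProduct.inl '' E
            exact ⟨g j, ⟨(hgE j).1, (hgE j).2⟩, rfl⟩
          · rw [wordLength_inv hSgen]
            exact hKb
      _ = 2 * K := by ring
  calc wordLength S h = wordLength S (hf * bH ^ tn) := by rw [← hh]
    _ ≤ wordLength S hf + wordLength S (bH ^ tn) := wordLength_mul_le hSgen _ _
    _ ≤ (wordLength S (bH ^ (m : ℤ) * LH.prod) + wordLength S (bH ^ ((m : ℤ) + 1)))
          + wordLength S (bH ^ tn) := by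
        rw [hHdecomp]
        exact Nat.add_le_add_right (wordLength_mul_le hSgen _ _) _
    _ ≤ ((wordLength S (bH ^ (m : ℤ)) + wordLength S LH.prod)
          + wordLength S (bH ^ ((m : ℤ) + 1))) + wordLength S (bH ^ tn) := by
        exact Nat.add_le_add_right (Nat.add_le_add_right (wordLength_mul_le hSgen _ _) _) _
    _ ≤ ((m * K + (2 * K) * (2 * m + 1)) + (m + 1) * K) + m * K := by
        exact add_le_add (add_le_add (add_le_add e1 e4) e2) e3
    _ ≤ (7 * K + 3) * (m + 1) := by nlinarith

theorem undistorted (hb : bGen A ∈ H) (T : Set (WreathProduct A Mℤ)) (S : Set ↥H)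
    (hTfin : T.Finite) (hTgen : Subgroup.closure T = ⊤)
    (hSfin : S.Finite) (hSgen : Subgroup.closure S = ⊤) :
    DistEquiv (distortion T H S) (fun l => l) := by
  obtain ⟨c, hc⟩ := exists_geo_bound T hTfin
  obtain ⟨C₁, hC₁pos, hC₁⟩ := main_est hb S hSfin hSgen
  have key : ∀ (l : ℕ) (h : ↥H), wordLength T (h : WreathProduct A Mℤ) ≤ l →
      wordLength S h ≤ C₁ * (c * l + 1) := by
    intro l h hl
    obtain ⟨L, hLmem, hLprod, hLlen⟩ := exists_word hTgen (h : WreathProduct A Mℤ)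
    have hgeo := geo c T hc L hLmem
    rw [hLprod] at hgeo
    have hlen : c * L.length ≤ c * l := Nat.mul_le_mul_left c (by omega)
    apply hC₁ h (c * l)
    · refine hgeo.1.trans ?_
      apply Set.Icc_subset_Icc
      · simp only [neg_le_neg_iff]
        exact_mod_cast hlen
      · exact_mod_cast hlen
    · exact le_trans hgeo.2 hlen
  have hmem1 : ∀ l : ℕ, (0 : ℕ) ∈ wordLength S '' {h : ↥H | wordLength T (h : WreathProduct A Mℤ) ≤ l} := by
    intro l
    refine ⟨1, ?_, wordLength_one S⟩
    show wordLength T ((1 : ↥H) : WreathProduct A Mℤ) ≤ l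
    rw [OneMemClass.coe_one, wordLength_one]
    omega
  have hbdd : ∀ l, BddAbove (wordLength S '' {h : ↥H | wordLength T (h : WreathProduct A Mℤ) ≤ l}) := by
    intro l
    refine ⟨C₁ * (c * l + 1), ?_⟩
    rintro x ⟨h, hh, rfl⟩
    exact key l h hh
  constructor
  · refine ⟨C₁ * (c + 1) + 1, by omega, ?_⟩
    intro l
    rcases Nat.eq_zero_or_pos l with rfl | hl
    · have hz : distortion T H S 0 = 0 := by
        apply Nat.le_zero.mp
        apply csSup_le ⟨0, hmem1 0⟩
        rintro x ⟨h, hh, rfl⟩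
        simp only [Set.mem_setOf_eq] at hh
        obtain ⟨L, hLmem, hLprod, hLlen⟩ := exists_word hTgen (h : WreathProduct A Mℤ)
        have hL0 : L = [] := List.length_eq_zero_iff.mp (by omega)
        have hcoe1 : (h : WreathProduct A Mℤ) = 1 := by rw [← hLprod, hL0, List.prod_nil]
        have h1 : h = (1 : ↥H) := Subtype.ext (by rw [hcoe1]; rfl)
        rw [h1, wordLength_one]
      rw [hz]
      omega
    · calc distortion T H S l ≤ C₁ * (c * l + 1) := by
            apply csSup_le ⟨0, hmem1 l⟩
            rintro x ⟨h, hh, rfl⟩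
            exact key l h hh
        _ = C₁ * c * l + C₁ * 1 := by ring
        _ ≤ C₁ * c * l + C₁ * l := Nat.add_le_add_left (Nat.mul_le_mul_left C₁ hl) _
        _ = (C₁ * (c + 1)) * l := by ring
        _ ≤ (C₁ * (c + 1) + 1) * l := Nat.mul_le_mul_right l (by omega)
        _ ≤ (C₁ * (c + 1) + 1) * ((C₁ * (c + 1) + 1) * l) :=
            Nat.le_mul_of_pos_left _ (by omega)
  · set bH : ↥H := ⟨bGen A, hb⟩ with hbH
    set c₀ : ℕ := wordLength T (bGen A) with hc₀
    obtain ⟨cS, hcS⟩ := exists_bound S hSfin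
      (fun s => (Multiplicative.toAdd ((s : ↥H) : WreathProduct A Mℤ).right).natAbs)
    refine ⟨c₀ + cS + 1, by omega, ?_⟩
    intro l
    set β : ↥H := bH ^ (l : ℤ) with hβ
    have hcoeβ : (β : WreathProduct A Mℤ) = (bGen A) ^ (l : ℤ) := by
      rw [hβ]; simp; rfl
    have hβT : wordLength T (β : WreathProduct A Mℤ) ≤ c₀ * l := by
      rw [hcoeβ]
      calc wordLength T ((bGen A) ^ (l : ℤ)) ≤ (l : ℤ).natAbs * c₀ :=
            wordLength_zpow_le hTgen _ _
        _ = c₀ * l := by rw [Int.natAbs_natCast]; ring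
    have h1 : l ≤ cS * wordLength S β := by
      obtain ⟨L, hLmem, hLprod, hLlen⟩ := exists_word hSgen β
      set φS : ↥H →* Mℤ := (SemidirectProduct.rightHom).comp H.subtype with hφS
      have hbound : ∀ x ∈ L, (Multiplicative.toAdd (φS x)).natAbs ≤ cS := by
        intro x hx
        rcases hLmem x hx with hxS | hxS
        · exact hcS x hxS
        · have hxi := hcS x⁻¹ (Set.mem_inv.mp hxS)
          have : (Multiplicative.toAdd (φS x)).natAbs
              = (Multiplicative.toAdd (φS x⁻¹)).natAbs := by
            rw [map_inv]
            simp
          rw [this]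
          exact hxi
      have habs := abs_hom_prod_le (φ := φS) L hbound
      rw [hLprod, hLlen] at habs
      have hφβ : Multiplicative.toAdd (φS β) = (l : ℤ) := by
        show Multiplicative.toAdd (SemidirectProduct.rightHom (H.subtype β)) = (l : ℤ)
        have : H.subtype β = (bGen A) ^ (l : ℤ) := hcoeβ
        rw [this, map_zpow]
        have hrb : SemidirectProduct.rightHom (bGen A) = Multiplicative.ofAdd (1 : ℤ) := by
          rw [bGen, ofActive, SemidirectProduct.rightHom_inr]
        rw [hrb, ofAdd_one_zpow]
        simp
      rw [hφβ] at habs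
      simpa using habs
    have h2 : wordLength S β ≤ distortion T H S ((c₀ + cS + 1) * l) := by
      apply le_csSup (hbdd _)
      refine ⟨β, ?_, rfl⟩
      show wordLength T (β : WreathProduct A Mℤ) ≤ (c₀ + cS + 1) * l
      calc wordLength T (β : WreathProduct A Mℤ) ≤ c₀ * l := hβT
        _ ≤ (c₀ + cS + 1) * l := Nat.mul_le_mul_right l (by omega)
    calc l ≤ cS * wordLength S β := h1
      _ ≤ (c₀ + cS + 1) * distortion T H S ((c₀ + cS + 1) * l) :=
          Nat.mul_le_mul (by omega) h2

end Mod


/-- For `p` prime and `k ≥ 1`, every finitely generated subgroup of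
`(ℤ/pℤ)^k wr ℤ` containing the active generator `b` is undistorted. -/
theorem statement17 (p : ℕ) (hp : p.Prime) (k : ℕ) (hk : 1 ≤ k)
    (H : Subgroup (WreathProduct (Multiplicative (Fin k → ZMod p)) Mℤ)) (hFG : H.FG)
    (hb : ofActive (Multiplicative (Fin k → ZMod p)) Mℤ (Multiplicative.ofAdd 1) ∈ H) :
    ∀ (T : Set (WreathProduct (Multiplicative (Fin k → ZMod p)) Mℤ)) (S : Set H),
      T.Finite → Subgroup.closure T = ⊤ → S.Finite → Subgroup.closure S = ⊤ →
      DistEquiv (distortion T H S) (fun l => l) := by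
  intro T S hTfin hTgen hSfin hSgen
  haveI : NeZero p := ⟨hp.ne_zero⟩
  haveI : Finite (Multiplicative (Fin k → ZMod p)) := Finite.of_equiv _ Multiplicative.ofAdd
  exact undistorted hb T S hTfin hTgen hSfin hSgen

end DistortionPaper
end
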